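/- arXiv:0705.3573 — 8 statements merged into one kernel-verified Lean document; each statement's English description precedes it below -/
import Mathlib

section
/- Let K be a field of characteristic different from 2, let n be a positive integer, and let D ∈ Mat_n(K) be a nonzero symmetric matrix. The quadratic form x ↦ xᵀDx on Kⁿ is isomorphic to a scaled trace form over K if and only if there exists a symmetric matrix A ∈ Mat_n(K) such that the characteristic polynomial of the product AD is separable and irreducible over K. -/
set_option maxHeartbeats 1000000

universe u v

/-- The scaled trace form `x ↦ Tr_{F/K}(α·x²)` on `F` viewed as a `K`-vector space. -/
noncomputable def scaledTraceForm (K F : Type*) [Field K] [Field F] [Algebra K F] (α : F) :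
    QuadraticForm K F :=
  LinearMap.BilinMap.toQuadraticMap
    ((Algebra.traceForm K F).compl₁₂ (LinearMap.mulLeft K α) LinearMap.id)

/-- `Q` is (isomorphic to) a scaled trace form over `K`: there are a finite separable field
extension `F/K` and a nonzero `α ∈ F` such that `Q` is equivalent to `x ↦ Tr_{F/K}(α·x²)`. -/
def IsScaledTraceForm {K : Type u} [Field K] {V : Type v} [AddCommGroup V] [Module K V]
    (Q : QuadraticForm K V) : Prop :=
  ∃ (F : Type u) (_ : Field F) (_ : Algebra K F),
    FiniteDimensional K F ∧ Algebra.IsSeparable K F ∧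
      ∃ α : F, α ≠ 0 ∧ QuadraticMap.Equivalent Q (scaledTraceForm K F α)


open Matrix Polynomial

namespace ScaledTraceAux

variable {K : Type u} [Field K] {n : ℕ}

lemma bilin_apply (D : Matrix (Fin n) (Fin n) K) (x y : Fin n → K) :
    Matrix.toLinearMap₂' K D x y = x ⬝ᵥ D.mulVec y := by
  simp only [Matrix.toLinearMap₂'_apply, smul_eq_mul, dotProduct, Matrix.mulVec,
    Finset.mul_sum]
  exact Finset.sum_congr rfl fun i _ => Finset.sum_congr rfl fun j _ => by ring

lemma bilin_symm {D : Matrix (Fin n) (Fin n) K} (hD : D.IsSymm) (x y : Fin n → K) :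
    x ⬝ᵥ D.mulVec y = y ⬝ᵥ D.mulVec x := by
  rw [Matrix.dotProduct_mulVec]
  conv_lhs => rw [← hD]
  rw [Matrix.vecMul_transpose, dotProduct_comm]

lemma matrix_eq_of_forall_dot {M N : Matrix (Fin n) (Fin n) K}
    (h : ∀ x y, x ⬝ᵥ M.mulVec y = x ⬝ᵥ N.mulVec y) : M = N := by
  ext i j
  have := h (Pi.single i 1) (Pi.single j 1)
  simpa [Matrix.mulVec_single, single_dotProduct] using this

lemma exists_symm_factor {D M : Matrix (Fin n) (Fin n) K} (hD : D.IsSymm)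
    (hdet : IsUnit D.det) (hadj : Mᵀ * D = D * M) :
    ∃ A : Matrix (Fin n) (Fin n) K, A.IsSymm ∧ A * D = M := by
  refine ⟨M * D⁻¹, ?_, by rw [Matrix.mul_assoc, Matrix.nonsing_inv_mul _ hdet, Matrix.mul_one]⟩
  have h1 : Mᵀ = D * M * D⁻¹ := by
    rw [← hadj, Matrix.mul_assoc, Matrix.mul_nonsing_inv _ hdet, Matrix.mul_one]
  show (M * D⁻¹)ᵀ = M * D⁻¹
  rw [Matrix.transpose_mul, Matrix.transpose_nonsing_inv, hD, h1, ← Matrix.mul_assoc,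
    ← Matrix.mul_assoc, Matrix.nonsing_inv_mul _ hdet, Matrix.one_mul]

lemma scaledTraceForm_apply' (K F : Type*) [Field K] [Field F] [Algebra K F] (α x : F) :
    (LinearMap.BilinMap.toQuadraticMap
      ((Algebra.traceForm K F).compl₁₂ (LinearMap.mulLeft K α) LinearMap.id)) x =
      Algebra.trace K F (α * (x * x)) := by
  simp only [LinearMap.BilinMap.toQuadraticMap_apply, LinearMap.compl₁₂_apply,
    LinearMap.mulLeft_apply, LinearMap.id_coe, id_eq, Algebra.traceForm_apply, mul_assoc]

lemma toQuadraticMap'_apply (D : Matrix (Fin n) (Fin n) K) (x : Fin n → K) :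
    D.toQuadraticMap' x = x ⬝ᵥ D.mulVec x := by
  rw [Matrix.toQuadraticMap', Matrix.toQuadraticForm', LinearMap.BilinMap.toQuadraticMap_apply, bilin_apply]

lemma pow_adjoint {D : Matrix (Fin n) (Fin n) K} {T : Module.End K (Fin n → K)}
    (hT : ∀ x y, x ⬝ᵥ D.mulVec (T y) = (T x) ⬝ᵥ D.mulVec y) (m : ℕ) (x y : Fin n → K) :
    x ⬝ᵥ D.mulVec ((T ^ m) y) = ((T ^ m) x) ⬝ᵥ D.mulVec y := by
  induction m generalizing x y with
  | zero => simp
  | succ m ih =>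
    have h1 : (T ^ (m + 1)) y = (T ^ m) (T y) := by rw [pow_succ, Module.End.mul_apply]
    have h2 : (T ^ (m + 1)) x = T ((T ^ m) x) := by rw [pow_succ', Module.End.mul_apply]
    rw [h1, ih, hT, ← h2]

lemma aeval_adjoint' {D : Matrix (Fin n) (Fin n) K} {T : Module.End K (Fin n → K)}
    (hT : ∀ x y, x ⬝ᵥ D.mulVec (T y) = (T x) ⬝ᵥ D.mulVec y) (q : K[X]) (x y : Fin n → K) :
    x ⬝ᵥ D.mulVec ((aeval T q) y) = ((aeval T q) x) ⬝ᵥ D.mulVec y := by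
  induction q using Polynomial.induction_on' generalizing x y with
  | add p q hp hq => simp [map_add, LinearMap.add_apply, Matrix.mulVec_add,
      dotProduct_add, add_dotProduct, hp, hq]
  | monomial m a =>
    simp only [aeval_monomial, Module.End.mul_apply, Module.algebraMap_end_apply,
      _root_.map_smul, Matrix.mulVec_smul, dotProduct_smul, smul_dotProduct,
      pow_adjoint hT m x y]

end ScaledTraceAux

open Matrix Polynomial ScaledTraceAux in
private lemma scaledTraceForm_apply_aux {K : Type u} (F : Type*) [Field K] [Field F] [Algebra K F]
    (α x : F) : scaledTraceForm K F α x = Algebra.trace K F (α * (x * x)) :=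
  ScaledTraceAux.scaledTraceForm_apply' K F α x

open Matrix Polynomial ScaledTraceAux IntermediateField in
/-- A nonzero symmetric matrix `D` represents a scaled trace form over `K` if and only if
there is a symmetric matrix `A` such that the characteristic polynomial of `A * D` is separable
and irreducible over `K`. -/
theorem toQuadraticMap'_isScaledTraceForm_iff
    (K : Type u) [Field K] (hchar : ringChar K ≠ 2) (n : ℕ) (hn : 0 < n)
    (D : Matrix (Fin n) (Fin n) K) (hD : D.IsSymm) (hD0 : D ≠ 0) :
    IsScaledTraceForm D.toQuadraticMap' ↔
      ∃ A : Matrix (Fin n) (Fin n) K, A.IsSymm ∧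
        (A * D).charpoly.Separable ∧ Irreducible (A * D).charpoly := by
  constructor
  · rintro ⟨F, fF, fA, hfin, hsep, α, hα0, hequiv⟩
    letI := fF; letI := fA
    haveI := hfin; haveI := hsep
    obtain ⟨iso⟩ := hequiv
    set e : (Fin n → K) ≃ₗ[K] F := iso.toLinearEquiv with he
    have happ : ∀ x, Algebra.trace K F (α * (e x * e x)) = x ⬝ᵥ D.mulVec x := by
      intro x
      have h := iso.map_app x
      rwa [toQuadraticMap'_apply, show iso x = e x from rfl, scaledTraceForm_apply_aux] at h
    have two_ne : (2 : K) ≠ 0 := Ring.two_ne_zero hchar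
    have hB : ∀ x y, x ⬝ᵥ D.mulVec y = Algebra.trace K F (α * (e x * e y)) := by
      intro x y
      have h1 := happ (x + y)
      have h2 := happ x
      have h3 := happ y
      rw [map_add] at h1
      have expand1 : (x + y) ⬝ᵥ D.mulVec (x + y)
          = x ⬝ᵥ D.mulVec x + y ⬝ᵥ D.mulVec y + 2 * (x ⬝ᵥ D.mulVec y) := by
        rw [Matrix.mulVec_add, dotProduct_add, add_dotProduct,
          add_dotProduct, bilin_symm hD y x]
        ring
      have expand2 : Algebra.trace K F (α * ((e x + e y) * (e x + e y)))
          = Algebra.trace K F (α * (e x * e x)) + Algebra.trace K F (α * (e y * e y))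
            + 2 * Algebra.trace K F (α * (e x * e y)) := by
        have h4 : α * ((e x + e y) * (e x + e y))
            = α * (e x * e x) + α * (e y * e y) + (α * (e x * e y) + α * (e x * e y)) := by ring
        rw [h4, map_add, map_add, map_add]
        ring
      apply mul_left_cancel₀ two_ne
      linear_combination (-1 : K) * h1 + h2 + h3 - expand1 + expand2
    have hdet : IsUnit D.det := by
      rw [isUnit_iff_ne_zero]
      intro h0
      obtain ⟨w, hw0, hDw⟩ := Matrix.exists_mulVec_eq_zero_iff.mpr h0
      have hev : α * e w = 0 := by
        apply (traceForm_nondegenerate K F).1 (α * e w)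
        intro z
        have h := hB (e.symm z) w
        rw [hDw, dotProduct_zero, LinearEquiv.apply_symm_apply] at h
        rw [Algebra.traceForm_apply, show α * e w * z = α * (z * e w) by ring, ← h]
      have hew : e w = 0 := by
        rcases mul_eq_zero.mp hev with h | h
        · exact absurd h hα0
        · exact h
      exact hw0 (by simpa using e.injective (hew.trans (map_zero e).symm))
    -- primitive element
    set pb := Field.powerBasisOfFiniteOfSeparable K F with hpb
    set θ : F := pb.gen with hθ
    set b : Module.Basis (Fin n) K F := (Pi.basisFun K (Fin n)).map e with hb
    set Mmat : Matrix (Fin n) (Fin n) K := Algebra.leftMulMatrix b θ with hMmat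
    have hrepr : ∀ z : F, ⇑(b.repr z) = e.symm z := by
      intro z
      funext i
      rw [hb, Module.Basis.map_repr]
      simp [Pi.basisFun_repr]
    have haction : ∀ x, Mmat.mulVec x = e.symm (θ * e x) := by
      intro x
      have h := Algebra.leftMulMatrix_mulVec_repr b θ (e x)
      rwa [hrepr, hrepr, LinearEquiv.symm_apply_apply] at h
    have heact : ∀ x, e (Mmat.mulVec x) = θ * e x := by
      intro x; rw [haction, LinearEquiv.apply_symm_apply]
    have hadj : Mmatᵀ * D = D * Mmat := by
      apply matrix_eq_of_forall_dot
      intro x y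
      rw [← Matrix.mulVec_mulVec, ← Matrix.mulVec_mulVec, Matrix.dotProduct_mulVec,
        Matrix.vecMul_transpose, hB, hB, heact, heact]
      congr 1
      ring
    have hcharpoly : Mmat.charpoly = minpoly K θ := by
      have e1 : Mmat.charpoly = (Algebra.lmul K F θ).charpoly := by
        rw [hMmat, Algebra.leftMulMatrix_apply]
        exact LinearMap.charpoly_toMatrix _ b
      have e2 : (Algebra.leftMulMatrix pb.basis θ).charpoly = (Algebra.lmul K F θ).charpoly := by
        rw [Algebra.leftMulMatrix_apply]
        exact LinearMap.charpoly_toMatrix _ pb.basis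
      rw [e1, ← e2, hθ]
      exact charpoly_leftMulMatrix pb
    obtain ⟨A, hAsym, hAD⟩ := exists_symm_factor hD hdet hadj
    refine ⟨A, hAsym, ?_, ?_⟩
    · rw [hAD, hcharpoly]
      exact Algebra.IsSeparable.isSeparable K θ
    · rw [hAD, hcharpoly]
      exact minpoly.irreducible (Algebra.IsIntegral.isIntegral θ)
  · rintro ⟨A, hA, hpsep, hirr⟩
    haveI := Fact.mk hirr
    set p : Polynomial K := (A * D).charpoly with hp
    have hpmonic : p.Monic := Matrix.charpoly_monic _
    have hpne : p ≠ 0 := hpmonic.ne_zero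
    set F := AdjoinRoot p with hF
    set pb : PowerBasis K F := AdjoinRoot.powerBasis hpne with hpb
    haveI hfinF : FiniteDimensional K F := pb.finite
    have hminp : minpoly K (AdjoinRoot.root p) = p := by
      rw [AdjoinRoot.minpoly_root hpne, hpmonic.leadingCoeff, inv_one, _root_.map_one, mul_one]
    have hsepRoot : IsSeparable K (AdjoinRoot.root p) := by
      show (minpoly K (AdjoinRoot.root p)).Separable
      rw [hminp]
      exact hpsep
    haveI hsepF : Algebra.IsSeparable K F := by
      haveI : Algebra.IsSeparable K K⟮AdjoinRoot.root p⟯ :=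
        (IntermediateField.isSeparable_adjoin_simple_iff_isSeparable K F).mpr hsepRoot
      exact Algebra.IsSeparable.of_algHom _ _
        (((IntermediateField.equivOfEq
            (IntermediateField.adjoin_root_eq_top p)).symm.toAlgHom).comp
          (IntermediateField.topEquiv (F := K) (E := F)).symm.toAlgHom)
    -- the endomorphism given by A * D
    set Mlin : Module.End K (Fin n → K) := Matrix.toLinAlgEquiv' (A * D) with hMlin
    have hMlinApply : ∀ x, Mlin x = (A * D).mulVec x := fun x => Matrix.toLinAlgEquiv'_apply _ _
    have hCH : (aeval Mlin) p = 0 := by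
      show (aeval (((Matrix.toLinAlgEquiv' (R := K) (n := Fin n)).toAlgHom :
        Matrix (Fin n) (Fin n) K →ₐ[K] Module.End K (Fin n → K)) (A * D))) p = 0
      rw [Polynomial.aeval_algHom_apply, hp, Matrix.aeval_self_charpoly, map_zero]
    have hSsymm : ((D * A) * D)ᵀ = (D * A) * D := by
      rw [Matrix.transpose_mul, Matrix.transpose_mul, hA, hD, Matrix.mul_assoc]
    have hTadj : ∀ x y, x ⬝ᵥ D.mulVec (Mlin y) = (Mlin x) ⬝ᵥ D.mulVec y := by
      intro x y
      rw [hMlinApply, hMlinApply, Matrix.mulVec_mulVec, bilin_symm hD ((A * D).mulVec x),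
        Matrix.mulVec_mulVec, ← Matrix.mul_assoc]
      exact bilin_symm hSsymm x y
    have hmem : ∀ a ∈ Ideal.span ({p} : Set (Polynomial K)), ((aeval Mlin).toRingHom) a = 0 := by
      intro a ha
      obtain ⟨q, rfl⟩ := Ideal.mem_span_singleton.mp ha
      show (aeval Mlin) (p * q) = 0
      rw [_root_.map_mul, hCH, zero_mul]
    set Ψ : AdjoinRoot p →+* Module.End K (Fin n → K) :=
      Ideal.Quotient.lift (Ideal.span {p}) ((aeval Mlin).toRingHom) hmem with hΨ
    have hΨmk : ∀ q : Polynomial K, Ψ (AdjoinRoot.mk p q) = (aeval Mlin) q := fun q => rfl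
    have hΨsmul : ∀ (c : K) (f : F), Ψ (c • f) = c • Ψ f := by
      intro c f
      obtain ⟨q, rfl⟩ := AdjoinRoot.mk_surjective f
      rw [AdjoinRoot.smul_mk, hΨmk, hΨmk, _root_.map_smul (aeval Mlin)]
    -- a nonzero vector
    set v : Fin n → K := Pi.single (⟨0, hn⟩ : Fin n) 1 with hv
    have hv0 : v ≠ 0 := by
      intro h
      have := congrFun h ⟨0, hn⟩
      rw [hv] at this
      simp at this
    -- the linear map F →ₗ[K] (Fin n → K)
    set ℓ : F →ₗ[K] (Fin n → K) :=
      { toFun := fun f => (Ψ f) v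
        map_add' := fun f g => by
          show (Ψ (f + g)) v
            = (Ψ f) v + (Ψ g) v
          rw [Ψ.map_add f g]
          rfl
        map_smul' := fun c f => by
          show (Ψ (c • f)) v
            = c • (Ψ f) v
          rw [hΨsmul c f]
          rfl } with hℓ
    have hℓapp : ∀ f : F, ℓ f = (Ψ f) v := fun _ => rfl
    have hmul : ∀ f g : F, ℓ (f * g) = ((Ψ f : Module.End K (Fin n → K))) (ℓ g) := by
      intro f g
      rw [hℓapp, hℓapp, Ψ.map_mul f g]
      rfl
    have hinj : Function.Injective ℓ := by
      rw [injective_iff_map_eq_zero]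
      intro f hf
      by_contra hne
      have h1 : (Ψ f⁻¹) ((Ψ f) v) = v := by
        have h2 : Ψ (f⁻¹ * f) = Ψ f⁻¹ * Ψ f := Ψ.map_mul _ _
        rw [inv_mul_cancel₀ hne, Ψ.map_one] at h2
        rw [← Module.End.mul_apply, ← h2, Module.End.one_apply]
      rw [hℓapp] at hf
      rw [hf, map_zero] at h1
      exact hv0 h1.symm
    have hfr : Module.finrank K F = Module.finrank K (Fin n → K) := by
      rw [pb.finrank, hpb, AdjoinRoot.powerBasis_dim, hp, Matrix.charpoly_natDegree_eq_dim,
        Fintype.card_fin, Module.finrank_fin_fun]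
    have hsurj : Function.Surjective ℓ :=
      (LinearMap.injective_iff_surjective_of_finrank_eq_finrank hfr).mp hinj
    set e : F ≃ₗ[K] (Fin n → K) := LinearEquiv.ofBijective ℓ ⟨hinj, hsurj⟩ with he
    have heapp : ∀ f : F, e f = ℓ f := fun _ => rfl
    -- adjointness for all Ψ f
    have hadjΨ : ∀ (f : F) (x y : Fin n → K),
        x ⬝ᵥ D.mulVec ((Ψ f) y) = ((Ψ f) x) ⬝ᵥ D.mulVec y := by
      intro f x y
      obtain ⟨q, rfl⟩ := AdjoinRoot.mk_surjective f
      rw [hΨmk]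
      exact aeval_adjoint' hTadj q x y
    have hBe : ∀ f g : F, (ℓ f) ⬝ᵥ D.mulVec (ℓ g) = v ⬝ᵥ D.mulVec (ℓ (f * g)) := by
      intro f g
      rw [hmul, hadjΨ, ← hℓapp]
    -- the dual element α
    have nd := traceForm_nondegenerate K F
    set L : Module.Dual K F := (Matrix.toLinearMap₂' K D v).comp ℓ with hL
    set α : F := ((Algebra.traceForm K F).toDual nd).symm L with hα
    have hαtr : ∀ f : F, Algebra.trace K F (α * f) = v ⬝ᵥ D.mulVec (ℓ f) := by
      intro f
      have h := LinearMap.BilinForm.apply_toDual_symm_apply (B := Algebra.traceForm K F)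
        (hB := nd) L f
      rw [← hα] at h
      rw [← Algebra.traceForm_apply, h, hL, LinearMap.comp_apply, bilin_apply]
    have hTrB : ∀ f g : F, Algebra.trace K F (α * (f * g)) = (ℓ f) ⬝ᵥ D.mulVec (ℓ g) := by
      intro f g
      rw [hαtr, ← hBe]
    have hα0 : α ≠ 0 := by
      intro h0
      apply hD0
      apply matrix_eq_of_forall_dot (N := 0)
      intro x y
      obtain ⟨f, hfx⟩ := hsurj x
      obtain ⟨g, hgy⟩ := hsurj y
      rw [← hfx, ← hgy, ← hTrB, h0, zero_mul, map_zero, Matrix.zero_mulVec,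
        dotProduct_zero]
    refine ⟨F, inferInstance, inferInstance, hfinF, hsepF, α, hα0, ⟨?_⟩⟩
    refine { e.symm with map_app' := fun x => ?_ }
    show scaledTraceForm K F α (e.symm x) = _
    rw [scaledTraceForm_apply_aux, toQuadraticMap'_apply, hTrB, ← heapp,
      LinearEquiv.apply_symm_apply]
end

section
/- Let L be a field of characteristic different from 2 and let d₁, d₂ ∈ L be nonzero elements. Then the polynomial d₁²t₁₁² + d₂²t₂₂² + 4d₁d₂t₁₂² − 2d₁d₂t₁₁t₂₂ (in the indeterminates t₁₁, t₁₂, t₂₂) is not a square in the rational function field L(t₁₁, t₁₂, t₂₂). -/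
universe u

open MvPolynomial

/-- Let `L` be a field of characteristic `≠ 2` and `d₁, d₂ ∈ L` nonzero. Then the polynomial
`d₁²t₁₁² + d₂²t₂₂² + 4d₁d₂t₁₂² − 2d₁d₂t₁₁t₂₂` is not a square in the rational function field
`L(t₁₁, t₁₂, t₂₂)` (here `t₁₁ = X 0`, `t₁₂ = X 1`, `t₂₂ = X 2`). -/
theorem discriminant_not_square (L : Type u) [Field L] (hchar : ringChar L ≠ 2)
    (d₁ d₂ : L) (hd₁ : d₁ ≠ 0) (hd₂ : d₂ ≠ 0) :
    ¬ ∃ g : FractionRing (MvPolynomial (Fin 3) L),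
      g ^ 2 = algebraMap (MvPolynomial (Fin 3) L) (FractionRing (MvPolynomial (Fin 3) L))
        (C (d₁ ^ 2) * X 0 ^ 2 + C (d₂ ^ 2) * X 2 ^ 2 + C (4 * (d₁ * d₂)) * X 1 ^ 2
          - C (2 * (d₁ * d₂)) * X 0 * X 2) := by
  rintro ⟨g, hg⟩
  set R := MvPolynomial (Fin 3) L with hR
  set P : R := C (d₁ ^ 2) * X 0 ^ 2 + C (d₂ ^ 2) * X 2 ^ 2 + C (4 * (d₁ * d₂)) * X 1 ^ 2
          - C (2 * (d₁ * d₂)) * X 0 * X 2 with hP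
  have htwo : (2 : L) ≠ 0 := Ring.two_ne_zero hchar
  have hc : (4 * (d₁ * d₂) : L) ≠ 0 := by
    have h4 : (4 : L) = 2 * 2 := by norm_num
    rw [h4]
    exact mul_ne_zero (mul_ne_zero htwo htwo) (mul_ne_zero hd₁ hd₂)
  haveI : IsIntegrallyClosed R := UniqueFactorizationMonoid.instIsIntegrallyClosed
  -- g is integral over R
  have hint : IsIntegral R g := by
    refine ⟨Polynomial.X ^ 2 - Polynomial.C P, ?_, ?_⟩
    · apply Polynomial.monic_X_pow_sub_C
      norm_num
    · simp [Polynomial.eval₂_sub, hg]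
      exact sub_self _
  obtain ⟨q, hq⟩ := IsIntegrallyClosed.isIntegral_iff.mp hint
  have hq2 : q ^ 2 = P := by
    apply IsFractionRing.injective R (FractionRing R)
    rw [map_pow, hq, hg]
  -- specialize: X 0 ↦ 0, X 1 ↦ X, X 2 ↦ 1
  set f : Fin 3 → Polynomial L := ![0, Polynomial.X, 1] with hf
  set s : Polynomial L := aeval f q with hs
  have hPev : aeval f P
      = Polynomial.C (4 * (d₁ * d₂)) * Polynomial.X ^ 2 + Polynomial.C (d₂ ^ 2) := by
    rw [hP]
    simp only [map_sub, map_add, map_mul, map_pow, aeval_C, aeval_X, hf,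
      Matrix.cons_val_zero, Matrix.cons_val_one, Matrix.head_cons, Matrix.cons_val_two,
      Matrix.tail_cons, Polynomial.algebraMap_eq, Polynomial.C_mul, Polynomial.C_pow]
    ring
  have hs2 : s ^ 2
      = Polynomial.C (4 * (d₁ * d₂)) * Polynomial.X ^ 2 + Polynomial.C (d₂ ^ 2) := by
    rw [hs, ← map_pow, hq2, hPev]
  -- coefficient analysis
  have hc2 : (s ^ 2).coeff 2 = 4 * (d₁ * d₂) := by
    rw [hs2, Polynomial.coeff_add, Polynomial.coeff_C_mul, Polynomial.coeff_X_pow,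
      Polynomial.coeff_C]
    norm_num
  have hc1 : (s ^ 2).coeff 1 = 0 := by
    rw [hs2, Polynomial.coeff_add, Polynomial.coeff_C_mul, Polynomial.coeff_X_pow,
      Polynomial.coeff_C]
    norm_num
  have hc0 : (s ^ 2).coeff 0 = d₂ ^ 2 := by
    rw [hs2, Polynomial.coeff_add, Polynomial.coeff_C_mul, Polynomial.coeff_X_pow,
      Polynomial.coeff_C]
    norm_num
  have hcoeff0 : s.coeff 0 ^ 2 = d₂ ^ 2 := by
    rw [← hc0, pow_two, pow_two, Polynomial.coeff_mul]; simp
  have hcoeff0ne : s.coeff 0 ≠ 0 := by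
    intro h
    rw [h] at hcoeff0
    exact hd₂ (by simpa [pow_eq_zero_iff] using hcoeff0.symm)
  have hcoeff1 : 2 * (s.coeff 0 * s.coeff 1) = 0 := by
    rw [← hc1, pow_two, Polynomial.coeff_mul, Finset.Nat.antidiagonal_succ, Finset.sum_cons,
      Finset.sum_map]
    simp
    ring
  have hcoeff1z : s.coeff 1 = 0 := by
    rcases mul_eq_zero.mp hcoeff1 with h | h
    · exact absurd h htwo
    · rcases mul_eq_zero.mp h with h' | h'
      · exact absurd h' hcoeff0ne
      · exact h'
  -- degree analysis
  have hsne : s ≠ 0 := by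
    intro h
    rw [h] at hc2
    exact hc (by simpa using hc2.symm)
  have hdeg2 : (s ^ 2).natDegree = 2 := by
    rw [hs2, Polynomial.natDegree_add_C, Polynomial.natDegree_C_mul_X_pow 2 _ hc]
  have hdegs : s.natDegree = 1 := by
    rw [Polynomial.natDegree_pow] at hdeg2
    omega
  have : s.leadingCoeff ≠ 0 := Polynomial.leadingCoeff_ne_zero.mpr hsne
  rw [Polynomial.leadingCoeff, hdegs, hcoeff1z] at this
  exact this rfl
end

section
/- Let G be a profinite group, let N ≤ N₀ ≤ G be closed subgroups with N normal in G, and let H be a continuous quotient of G (i.e., there is a continuous surjective homomorphism G → H of profinite groups) such that H and G/N have no common nontrivial continuous quotient. Then H is a continuous quotient of N₀. In particular, if H has an open subgroup of index n, then so does N₀. -/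
universe u

/-- The quotient of a profinite group by a closed normal subgroup is totally separated. -/
theorem totallySeparated_quotient_of_profinite
    (H : Type u) [Group H] [TopologicalSpace H] [IsTopologicalGroup H]
    [CompactSpace H] [T2Space H] [TotallyDisconnectedSpace H]
    (M : Subgroup H) [M.Normal] (hM : IsClosed (M : Set H)) :
    TotallySeparatedSpace (H ⧸ M) := by
  haveI : T3Space (H ⧸ M) := QuotientGroup.instT3Space M
  constructor
  intro x _ y _ hxy
  -- it suffices to find an open subgroup of `H ⧸ M` not containing `x⁻¹ * y`
  suffices h : ∃ U : Subgroup (H ⧸ M), IsOpen (U : Set (H ⧸ M)) ∧ x⁻¹ * y ∉ U by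
    obtain ⟨U, hUopen, hxyU⟩ := h
    have hUclosed : IsClosed (U : Set (H ⧸ M)) := U.isClosed_of_isOpen hUopen
    have himg : (Homeomorph.mulLeft x) '' (U : Set (H ⧸ M)) = (x * ·) '' (U : Set (H ⧸ M)) := rfl
    refine ⟨(x * ·) '' (U : Set (H ⧸ M)), ((x * ·) '' (U : Set (H ⧸ M)))ᶜ, ?_, ?_, ?_, ?_, ?_, ?_⟩
    · rw [← himg, Homeomorph.isOpen_image]; exact hUopen
    · rw [← himg]
      exact (((Homeomorph.mulLeft x).isClosedMap _ hUclosed).isOpen_compl)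
    · exact ⟨1, U.one_mem, by simp⟩
    · intro hy
      obtain ⟨u, hu, hxu⟩ := hy
      simp only at hxu
      exact hxyU (by rw [← hxu, inv_mul_cancel_left]; exact hu)
    · simp [Set.union_compl_self]
    · exact disjoint_compl_right
  -- since `H ⧸ M` is T1, the preimage of `{x⁻¹ * y}` in `H` is closed and misses `1`
  set q : H ⧸ M := x⁻¹ * y with hq
  have hq1 : q ≠ 1 := by
    simp [hq, inv_mul_eq_one, hxy]
  have hclosed : IsClosed ((QuotientGroup.mk : H → H ⧸ M) ⁻¹' {q}) :=
    (isClosed_singleton).preimage continuous_quotient_mk'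
  have h1mem : (1 : H) ∈ ((QuotientGroup.mk : H → H ⧸ M) ⁻¹' {q})ᶜ := by
    simp only [Set.mem_compl_iff, Set.mem_preimage, Set.mem_singleton_iff]
    intro h
    exact hq1 h.symm
  obtain ⟨W, hWclopen, hW1, hWsub⟩ :=
    compact_exists_isClopen_in_isOpen hclosed.isOpen_compl h1mem
  obtain ⟨K, hK⟩ :=
    IsTopologicalGroup.exist_openNormalSubgroup_sub_clopen_nhds_of_one hWclopen hW1
  refine ⟨K.toSubgroup.map (QuotientGroup.mk' M), ?_, ?_⟩
  · have : IsOpenMap (QuotientGroup.mk : H → H ⧸ M) := QuotientGroup.isOpenMap_coe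
    exact this _ K.isOpen
  · rintro ⟨k, hk, hkq⟩
    have : k ∈ ((QuotientGroup.mk : H → H ⧸ M) ⁻¹' {q})ᶜ := hWsub (hK hk)
    exact this hkq

/-- Let `G` be a profinite group, `N ≤ N₀ ≤ G` closed subgroups with `N` normal in `G`, and
`H` a continuous quotient of `G` such that `H` and `G/N` have no common nontrivial continuous
quotient. Then `H` is a continuous quotient of `N₀`; in particular, if `H` has an open
subgroup of index `n`, then so does `N₀`. -/
theorem quotient_of_subgroup_of_no_common_quotient
    (G : Type u) [Group G] [TopologicalSpace G] [IsTopologicalGroup G]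
    [CompactSpace G] [T2Space G] [TotallyDisconnectedSpace G]
    (N N₀ : Subgroup G) (hle : N ≤ N₀) [N.Normal]
    (hN : IsClosed (N : Set G)) (hN₀ : IsClosed (N₀ : Set G))
    (H : Type u) [Group H] [TopologicalSpace H] [IsTopologicalGroup H]
    [CompactSpace H] [T2Space H] [TotallyDisconnectedSpace H]
    (φ : G →* H) (hφcont : Continuous φ) (hφsurj : Function.Surjective φ)
    (hcommon : ∀ (Q : Type u) [Group Q] [TopologicalSpace Q] [IsTopologicalGroup Q]
      [CompactSpace Q] [T2Space Q] [TotallyDisconnectedSpace Q],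
      (∃ ρ : H →* Q, Continuous ρ ∧ Function.Surjective ρ) →
      (∃ ψ : G →* Q, Continuous ψ ∧ Function.Surjective ψ ∧ N ≤ ψ.ker) →
      Subsingleton Q) :
    (∃ θ : N₀ →* H, Continuous θ ∧ Function.Surjective θ) ∧
      ∀ n : ℕ, (∃ U : Subgroup H, IsOpen (U : Set H) ∧ U.index = n) →
        ∃ U : Subgroup N₀, IsOpen (U : Set N₀) ∧ U.index = n := by
  -- Let `M = φ(N)`, a closed normal subgroup of `H`.
  set M : Subgroup H := N.map φ with hM
  haveI : M.Normal := Subgroup.Normal.map ‹N.Normal› φ hφsurj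
  have hMclosed : IsClosed (M : Set H) := by
    have hNcompact : IsCompact (N : Set G) := hN.isCompact
    have : IsCompact (M : Set H) := by
      rw [hM, Subgroup.coe_map]
      exact hNcompact.image hφcont
    exact this.isClosed
  -- The quotient `H ⧸ M` is profinite.
  haveI : T3Space (H ⧸ M) := QuotientGroup.instT3Space M
  haveI : TotallySeparatedSpace (H ⧸ M) :=
    totallySeparated_quotient_of_profinite H M hMclosed
  haveI : TotallyDisconnectedSpace (H ⧸ M) :=
    TotallySeparatedSpace.totallyDisconnectedSpace (H ⧸ M)
  -- Apply the no-common-quotient hypothesis to `Q = H ⧸ M`.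
  have hsub : Subsingleton (H ⧸ M) := by
    refine hcommon (H ⧸ M) ⟨QuotientGroup.mk' M, continuous_quotient_mk',
      QuotientGroup.mk'_surjective M⟩
      ⟨(QuotientGroup.mk' M).comp φ, (continuous_quotient_mk').comp hφcont,
        (QuotientGroup.mk'_surjective M).comp hφsurj, ?_⟩
    intro x hx
    simp only [MonoidHom.mem_ker, MonoidHom.comp_apply, QuotientGroup.mk'_apply]
    rw [QuotientGroup.eq_one_iff]
    exact ⟨x, hx, rfl⟩
  -- Hence `M = ⊤`, i.e. `φ` maps `N` (hence `N₀`) onto `H`.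
  have hMtop : ∀ h : H, h ∈ M := by
    intro h
    have : (h : H ⧸ M) = ((1 : H) : H ⧸ M) := Subsingleton.elim _ _
    rw [QuotientGroup.mk_one, QuotientGroup.eq_one_iff] at this
    exact this
  set θ : N₀ →* H := φ.comp N₀.subtype with hθ
  have hθcont : Continuous θ := hφcont.comp continuous_subtype_val
  have hθsurj : Function.Surjective θ := by
    intro h
    obtain ⟨n, hn, hnh⟩ := hMtop h
    exact ⟨⟨n, hle hn⟩, hnh⟩
  refine ⟨⟨θ, hθcont, hθsurj⟩, ?_⟩
  rintro n ⟨U, hUopen, hUindex⟩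
  exact ⟨U.comap θ, hUopen.preimage hθcont, by
    rw [Subgroup.index_comap_of_surjective U hθsurj, hUindex]⟩
end

section
/- Let p be a prime and let m, k be positive integers with p ∤ m and p | φ(m), where φ is Euler's totient function. Let α ∈ (ℤ/mℤ)* be an element of multiplicative order p such that α − 1 is a unit in ℤ/mℤ, and let H = ℤ/mℤ ⋊ ℤ/p^kℤ be the semidirect product in which x ∈ ℤ/p^kℤ acts on ℤ/mℤ by multiplication by α^x. Then H is generated by its p-Sylow subgroups. -/
/-- The monoid homomorphism `AddAut A →* MulAut (Multiplicative A)`. -/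
def addAutToMulAut (A : Type*) [AddGroup A] : Multiplicative (AddAut A) →* MulAut (Multiplicative A) where
  toFun e := AddEquiv.toMultiplicative e.toAdd
  map_one' := rfl
  map_mul' _ _ := rfl

/-- The action of `ℤ/p^kℤ` on `ℤ/mℤ` in which `x` acts as multiplication by `α^x`, for a unit
`α` of `ℤ/mℤ` satisfying `α ^ (p^k) = 1`. -/
noncomputable def zmodSemidirectAction (m q : ℕ) (α : (ZMod m)ˣ) (h : α ^ q = 1) :
    Multiplicative (ZMod q) →* MulAut (Multiplicative (ZMod m)) :=
  ((addAutToMulAut (ZMod m)).comp (DistribMulAction.toAddAut (ZMod m)ˣ (ZMod m))).comp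
    (AddMonoidHom.toMultiplicativeLeft
      (ZMod.lift q ⟨zmultiplesHom (Additive (ZMod m)ˣ) (Additive.ofMul α), by
        simp only [zmultiplesHom_apply, ← ofMul_zpow, zpow_natCast, h]; rfl⟩))

/-- The group `H = ℤ/mℤ ⋊ ℤ/qℤ` (with `q = p^k`). -/
noncomputable abbrev zmodSemidirectProduct (m q : ℕ) (α : (ZMod m)ˣ) (h : α ^ q = 1) :=
  SemidirectProduct (Multiplicative (ZMod m)) (Multiplicative (ZMod q))
    (zmodSemidirectAction m q α h)

/-- Let `p` be prime, `p ∤ m`, `p ∣ φ(m)`, and let `α ∈ (ℤ/mℤ)*` have order `p` with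
`α - 1` a unit. Then `H = ℤ/mℤ ⋊ ℤ/p^kℤ` is generated by its `p`-Sylow subgroups. -/
theorem zmodSemidirectProduct_generated_by_sylow
    (p m k : ℕ) (hp : p.Prime) (hm : 0 < m) (hk : 0 < k)
    (hpm : ¬ p ∣ m) (hptot : p ∣ Nat.totient m)
    (α : (ZMod m)ˣ) (hord : orderOf α = p)
    (hunit : IsUnit ((α : ZMod m) - 1)) (h1 : α ^ p ^ k = 1) :
    ⨆ P : Sylow p (zmodSemidirectProduct m (p ^ k) α h1),
      (P : Subgroup (zmodSemidirectProduct m (p ^ k) α h1)) = ⊤ := by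
  set q := p ^ k with hq
  have hact : ∀ B : ZMod m,
      zmodSemidirectAction m q α h1 (Multiplicative.ofAdd (1 : ZMod q)) (Multiplicative.ofAdd B)
        = Multiplicative.ofAdd ((α : ZMod m) * B) := by
    intro B
    have h : (1 : ZMod q) = ((1 : ℤ) : ZMod q) := by push_cast; rfl
    unfold zmodSemidirectAction addAutToMulAut
    simp only [MonoidHom.comp_apply, MonoidHom.coe_mk, OneHom.coe_mk,
      AddMonoidHom.toMultiplicativeLeft_apply_apply]
    rw [h]
    simp only [toAdd_ofAdd, ZMod.lift_coe]
    simp [Units.smul_def]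
    rfl
  have key : ∀ g : zmodSemidirectProduct m q α h1, g ^ q = 1 →
      g ∈ ⨆ P : Sylow p (zmodSemidirectProduct m q α h1),
        (P : Subgroup (zmodSemidirectProduct m q α h1)) := by
    intro g hg
    have hpg : IsPGroup p (Subgroup.zpowers g) := by
      rintro ⟨x, hx⟩
      refine ⟨k, Subtype.ext ?_⟩
      obtain ⟨j, hj⟩ := hx
      push_cast
      show x ^ p ^ k = 1
      rw [← hj]
      show (g ^ j) ^ p ^ k = 1
      rw [← zpow_natCast, ← zpow_mul, mul_comm, zpow_mul, zpow_natCast, hg, one_zpow]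
    obtain ⟨P, hP⟩ := hpg.exists_le_sylow
    exact Subgroup.mem_iSup_of_mem P (hP (Subgroup.mem_zpowers g))
  have hr : ∀ r : Multiplicative (ZMod q),
      (SemidirectProduct.inr r : zmodSemidirectProduct m q α h1) ^ q = 1 := by
    intro r
    rw [← map_pow, ← map_one (SemidirectProduct.inr (φ := zmodSemidirectAction m q α h1))]
    congr 1
    have h0 : q • r.toAdd = 0 := by
      rw [nsmul_eq_mul, ZMod.natCast_self, zero_mul]
    rw [← ofAdd_toAdd r, ← ofAdd_nsmul, h0]
    rfl
  rw [eq_top_iff]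
  intro g _
  rw [← SemidirectProduct.inl_left_mul_inr_right g]
  refine mul_mem ?_ (key _ (hr _))
  set l : ZMod m := g.left.toAdd with hl
  set u := hunit.unit with hu
  set B : ZMod m := -((u⁻¹ : (ZMod m)ˣ) : ZMod m) * l with hB
  have hBl : B - (α : ZMod m) * B = l := by
    have h2 : ((u : ZMod m)) * ((u⁻¹ : (ZMod m)ˣ) : ZMod m) = 1 := by
      rw [← Units.val_mul, mul_inv_cancel, Units.val_one]
    calc B - (α : ZMod m) * B
        = (((α : ZMod m) - 1) * ((u⁻¹ : (ZMod m)ˣ) : ZMod m)) * l := by rw [hB]; ring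
      _ = l := by rw [← hunit.unit_spec, ← hu, h2, one_mul]
  set c : zmodSemidirectProduct m q α h1 :=
    SemidirectProduct.inl (Multiplicative.ofAdd B) *
      SemidirectProduct.inr (Multiplicative.ofAdd (1 : ZMod q)) *
      (SemidirectProduct.inl (Multiplicative.ofAdd B))⁻¹ with hc
  have hcN : c ^ q = 1 := by
    rw [hc, conj_pow, hr, mul_one, mul_inv_cancel]
  have hgl : SemidirectProduct.inl g.left
      = c * (SemidirectProduct.inr (Multiplicative.ofAdd (1 : ZMod q)))⁻¹ := by
    rw [hc]
    ext
    · simp only [SemidirectProduct.mul_left, SemidirectProduct.inv_left,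
        SemidirectProduct.left_inl, SemidirectProduct.left_inr, SemidirectProduct.right_inl,
        SemidirectProduct.right_inr, SemidirectProduct.mul_right, map_one, map_inv,
        MulAut.one_apply, mul_one, one_mul, inv_one]
      rw [hact, ← ofAdd_toAdd g.left, ← hl, ← hBl, ← ofAdd_neg, ← ofAdd_add, sub_eq_add_neg]
    · simp
  rw [hgl]
  exact mul_mem (key _ hcN) (inv_mem (key _ (hr _)))
end

section
/- Let p be a prime and let m, k be positive integers with p ∤ m and p | φ(m), where φ is Euler's totient function. Let α ∈ (ℤ/mℤ)* be an element of multiplicative order p such that α − 1 is a unit in ℤ/mℤ, and let H = ℤ/mℤ ⋊ ℤ/p^kℤ be the semidirect product in which x ∈ ℤ/p^kℤ acts on ℤ/mℤ by multiplication by α^x. Then the only quotient of H of order prime to p is the trivial group; that is, if N is a normal subgroup of H such that p does not divide the order of H/N, then N = H. -/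
lemma act_one (m q : ℕ) (α : (ZMod m)ˣ) (h : α ^ q = 1) (a : ZMod m) :
    (zmodSemidirectAction m q α h) (Multiplicative.ofAdd (1 : ZMod q))
      (Multiplicative.ofAdd a) = Multiplicative.ofAdd ((α : ZMod m) * a) := by
  have h1 : (1 : ZMod q) = ((1 : ℤ) : ZMod q) := by push_cast; rfl
  show (AddEquiv.toMultiplicative (Multiplicative.toAdd (DistribMulAction.toAddAut (ZMod m)ˣ (ZMod m)
      (Multiplicative.toAdd (Additive.toMul ((ZMod.lift q
        ⟨zmultiplesHom (Additive (ZMod m)ˣ) (Additive.ofMul α), by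
          simp only [zmultiplesHom_apply, ← ofMul_zpow, zpow_natCast, h]; rfl⟩)
        (Multiplicative.toAdd (Multiplicative.ofAdd (1 : ZMod q)))))) : Multiplicative (AddAut (ZMod m))))) _ = _
  rw [toAdd_ofAdd, h1, ZMod.lift_coe]
  simp [Units.smul_def]
  rfl

/-- Let `p` be prime, `p ∤ m`, `p ∣ φ(m)`, and let `α ∈ (ℤ/mℤ)*` have order `p` with
`α - 1` a unit. Then the only quotient of `H = ℤ/mℤ ⋊ ℤ/p^kℤ` of order prime to `p` is
trivial: if `N ⊴ H` and `p ∤ |H/N|` then `N = H`. -/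
theorem zmodSemidirectProduct_primeToP_quotient_trivial
    (p m k : ℕ) (hp : p.Prime) (hm : 0 < m) (hk : 0 < k)
    (hpm : ¬ p ∣ m) (hptot : p ∣ Nat.totient m)
    (α : (ZMod m)ˣ) (hord : orderOf α = p)
    (hunit : IsUnit ((α : ZMod m) - 1)) (h1 : α ^ p ^ k = 1)
    (N : Subgroup (zmodSemidirectProduct m (p ^ k) α h1)) (hN : N.Normal)
    (hquot : ¬ p ∣ Nat.card (zmodSemidirectProduct m (p ^ k) α h1 ⧸ N)) :
    N = ⊤ := by
  haveI : NeZero m := ⟨hm.ne'⟩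
  haveI : NeZero (p ^ k) := ⟨pow_ne_zero k hp.pos.ne'⟩
  set H := zmodSemidirectProduct m (p ^ k) α h1 with hH
  haveI : Finite H := Finite.of_injective
    (fun g : H => (g.left, g.right)) (by
      intro g h hgh
      simp only [Prod.mk.injEq] at hgh
      exact SemidirectProduct.ext hgh.1 hgh.2)
  set f := QuotientGroup.mk' N with hf
  have hcop : Nat.Coprime (p ^ k) (Nat.card (H ⧸ N)) :=
    Nat.Coprime.pow_left k ((hp.coprime_iff_not_dvd).mpr hquot)
  -- inr elements are in N
  have hinr : ∀ x : Multiplicative (ZMod (p ^ k)), SemidirectProduct.inr x ∈ N := by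
    intro x
    rw [← QuotientGroup.ker_mk' N, MonoidHom.mem_ker]
    have hpow : (f (SemidirectProduct.inr x)) ^ (p ^ k) = 1 := by
      rw [← map_pow, ← map_pow]
      have : x ^ (p ^ k) = 1 := by
        have : (p ^ k) • (Multiplicative.toAdd x) = 0 := by
          rw [nsmul_eq_mul]
          simp [ZMod.natCast_self]
        rw [← ofAdd_toAdd x, ← ofAdd_nsmul, this, ofAdd_zero]
      rw [this]
      simp
    have hdvd1 : orderOf (f (SemidirectProduct.inr x)) ∣ p ^ k := orderOf_dvd_of_pow_eq_one hpow
    have hdvd2 : orderOf (f (SemidirectProduct.inr x)) ∣ Nat.card (H ⧸ N) :=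
      orderOf_dvd_natCard _
    have : orderOf (f (SemidirectProduct.inr x)) = 1 :=
      Nat.eq_one_of_dvd_one (hcop ▸ Nat.dvd_gcd hdvd1 hdvd2)
    rwa [orderOf_eq_one_iff] at this
  -- inl elements are in N
  have hinl : ∀ b : ZMod m, SemidirectProduct.inl (Multiplicative.ofAdd b) ∈ N := by
    intro b
    set u := hunit.unit with hu
    set a : ZMod m := (↑u⁻¹ : ZMod m) * b with ha
    have hab : ((α : ZMod m) - 1) * a = b := by
      rw [ha, ← mul_assoc]
      have : ((α : ZMod m) - 1) * (↑u⁻¹ : ZMod m) = 1 := by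
        rw [hu]
        have := u.mul_inv
        simpa [hu] using this
      rw [this, one_mul]
    set t : Multiplicative (ZMod (p ^ k)) := Multiplicative.ofAdd 1 with htdef
    have hconj : SemidirectProduct.inl ((zmodSemidirectAction m (p ^ k) α h1 t)
        (Multiplicative.ofAdd a)) = SemidirectProduct.inr t *
        SemidirectProduct.inl (Multiplicative.ofAdd a) * SemidirectProduct.inr t⁻¹ :=
      SemidirectProduct.inl_aut t _
    rw [act_one] at hconj
    have hmem : SemidirectProduct.inl (Multiplicative.ofAdd ((α : ZMod m) * a)) *
        (SemidirectProduct.inl (Multiplicative.ofAdd a))⁻¹ ∈ N := by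
      rw [hconj]
      have h2 := hinr t
      have h3 : SemidirectProduct.inr t * SemidirectProduct.inl (Multiplicative.ofAdd a) *
          SemidirectProduct.inr t⁻¹ * (SemidirectProduct.inl (Multiplicative.ofAdd a))⁻¹ ∈ N := by
        rw [← QuotientGroup.ker_mk' N, MonoidHom.mem_ker] at h2 ⊢
        simp only [map_mul, map_inv, h2]
        simp
      exact h3
    have : SemidirectProduct.inl (Multiplicative.ofAdd ((α : ZMod m) * a)) *
        (SemidirectProduct.inl (Multiplicative.ofAdd a))⁻¹ =
        (SemidirectProduct.inl (Multiplicative.ofAdd (((α : ZMod m) - 1) * a)) : H) := by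
      rw [← map_inv, ← map_mul]
      congr 1
      rw [← ofAdd_neg, ← ofAdd_add]
      congr 1
      ring
    rw [this, hab] at hmem
    exact hmem
  rw [eq_top_iff]
  intro g _
  rw [← SemidirectProduct.inl_left_mul_inr_right g]
  exact N.mul_mem (by simpa using hinl (Multiplicative.toAdd g.left)) (hinr g.right)
end

section
/- Let p be a prime and let m, k be positive integers with p ∤ m and p | φ(m), where φ is Euler's totient function. Let α ∈ (ℤ/mℤ)* be an element of multiplicative order p such that α − 1 is a unit in ℤ/mℤ, and let H = ℤ/mℤ ⋊ ℤ/p^kℤ be the semidirect product in which x ∈ ℤ/p^kℤ acts on ℤ/mℤ by multiplication by α^x. Then the elements (0,1) and (1,1) of H each have order exactly p^k, and together they generate H. -/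
lemma zmodSemidirectAction_apply (m q : ℕ) (α : (ZMod m)ˣ) (h : α ^ q = 1) (n : ℕ) (a : ZMod m) :
    zmodSemidirectAction m q α h (Multiplicative.ofAdd ((n : ℕ) : ZMod q))
      (Multiplicative.ofAdd a) = Multiplicative.ofAdd ((α : ZMod m) ^ n * a) := by
  rw [show ((n : ℕ) : ZMod q) = ((n : ℤ) : ZMod q) by push_cast; rfl]
  simp [zmodSemidirectAction, addAutToMulAut, -Int.cast_natCast]
  show Multiplicative.ofAdd ((α ^ n : (ZMod m)ˣ) • a) = _
  simp [Units.smul_def]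


/-- Let `p` be prime, `p ∤ m`, `p ∣ φ(m)`, and let `α ∈ (ℤ/mℤ)*` have order `p` with
`α - 1` a unit. Then in `H = ℤ/mℤ ⋊ ℤ/p^kℤ` the elements `(0,1)` and `(1,1)` each have
order exactly `p^k`, and together they generate `H`. -/
theorem zmodSemidirectProduct_generators
    (p m k : ℕ) (hp : p.Prime) (hm : 0 < m) (hk : 0 < k)
    (hpm : ¬ p ∣ m) (hptot : p ∣ Nat.totient m)
    (α : (ZMod m)ˣ) (hord : orderOf α = p)
    (hunit : IsUnit ((α : ZMod m) - 1)) (h1 : α ^ p ^ k = 1) :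
    letI H := zmodSemidirectProduct m (p ^ k) α h1
    letI g₀ : H := SemidirectProduct.inr (Multiplicative.ofAdd (1 : ZMod (p ^ k)))
    letI g₁ : H := ⟨Multiplicative.ofAdd (1 : ZMod m), Multiplicative.ofAdd (1 : ZMod (p ^ k))⟩
    orderOf g₀ = p ^ k ∧ orderOf g₁ = p ^ k ∧ Subgroup.closure {g₀, g₁} = ⊤ := by
  set g₀ : zmodSemidirectProduct m (p ^ k) α h1 :=
    SemidirectProduct.inr (Multiplicative.ofAdd (1 : ZMod (p ^ k))) with hg0def
  set g₁ : zmodSemidirectProduct m (p ^ k) α h1 :=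
    ⟨Multiplicative.ofAdd (1 : ZMod m), Multiplicative.ofAdd (1 : ZMod (p ^ k))⟩ with hg1def
  haveI : NeZero (p ^ k) := ⟨pow_ne_zero k hp.pos.ne'⟩
  haveI : NeZero m := ⟨hm.ne'⟩
  -- order of ofAdd 1 in Multiplicative (ZMod (p^k))
  have hord1 : orderOf (Multiplicative.ofAdd (1 : ZMod (p ^ k))) = p ^ k := by
    rw [orderOf_ofAdd_eq_addOrderOf, ZMod.addOrderOf_one]
  have hg₀ : orderOf g₀ = p ^ k := by
    rw [orderOf_injective SemidirectProduct.inr SemidirectProduct.inr_injective, hord1]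
  -- power formula for g₁
  have hpow : ∀ n : ℕ, g₁ ^ n =
      ⟨Multiplicative.ofAdd (∑ i ∈ Finset.range n, (α : ZMod m) ^ i),
        Multiplicative.ofAdd ((n : ZMod (p ^ k)))⟩ := by
    intro n
    induction n with
    | zero => simp
    | succ n ih =>
      rw [pow_succ, ih]
      ext
      · show _ * (zmodSemidirectAction m (p ^ k) α h1 (Multiplicative.ofAdd ((n : ZMod (p ^ k))))
          (Multiplicative.ofAdd (1 : ZMod m))) = _
        rw [zmodSemidirectAction_apply, mul_one]
        show Multiplicative.ofAdd _ = Multiplicative.ofAdd _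
        rw [Finset.sum_range_succ]
        rfl
      · show Multiplicative.ofAdd (_ : ZMod (p ^ k)) * Multiplicative.ofAdd (_ : ZMod (p ^ k)) = Multiplicative.ofAdd (_ : ZMod (p ^ k))
        rw [← ofAdd_add]
        push_cast
        rfl
  have hsum : (∑ i ∈ Finset.range (p ^ k), (α : ZMod m) ^ i) = 0 := by
    have hg : (∑ i ∈ Finset.range (p ^ k), (α : ZMod m) ^ i) * ((α : ZMod m) - 1)
        = (α : ZMod m) ^ (p ^ k) - 1 := geom_sum_mul _ _
    have : (α : ZMod m) ^ (p ^ k) = 1 := by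
      rw [← Units.val_pow_eq_pow_val, h1, Units.val_one]
    rw [this, sub_self] at hg
    exact hunit.mul_left_eq_zero.mp hg
  have hg₁pow : g₁ ^ (p ^ k) = 1 := by
    rw [hpow, hsum, ZMod.natCast_self]
    rfl
  have hg₁ : orderOf g₁ = p ^ k := by
    have hd1 : orderOf g₁ ∣ p ^ k := orderOf_dvd_of_pow_eq_one hg₁pow
    have hd2 : p ^ k ∣ orderOf g₁ := by
      have := orderOf_map_dvd (SemidirectProduct.rightHom
        (φ := zmodSemidirectAction m (p ^ k) α h1)) g₁
      rw [show SemidirectProduct.rightHom g₁ = Multiplicative.ofAdd (1 : ZMod (p ^ k)) from rfl,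
        hord1] at this
      exact this
    exact Nat.dvd_antisymm hd1 hd2
  refine ⟨hg₀, hg₁, ?_⟩
  rw [eq_top_iff]
  have hg₀mem : g₀ ∈ Subgroup.closure {g₀, g₁} :=
    Subgroup.subset_closure (by simp)
  have hg₁mem : g₁ ∈ Subgroup.closure {g₀, g₁} :=
    Subgroup.subset_closure (by simp)
  have hinl1 : (SemidirectProduct.inl (Multiplicative.ofAdd (1 : ZMod m)) : zmodSemidirectProduct m (p ^ k) α h1)
      ∈ Subgroup.closure {g₀, g₁} := by
    have hfac : g₁ * g₀⁻¹ = SemidirectProduct.inl (Multiplicative.ofAdd (1 : ZMod m)) := by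
      have : g₁ = SemidirectProduct.inl (Multiplicative.ofAdd (1 : ZMod m)) * g₀ := by
        ext <;> simp [g₀, g₁]
      rw [this, mul_inv_cancel_right]
    exact hfac ▸ mul_mem hg₁mem (inv_mem hg₀mem)
  rintro ⟨a, x⟩ -
  have hdecomp : (⟨a, x⟩ : zmodSemidirectProduct m (p ^ k) α h1) = SemidirectProduct.inl a * SemidirectProduct.inr x := by
    ext <;> simp
  rw [hdecomp]
  refine mul_mem ?_ ?_
  · have hA : (Multiplicative.ofAdd (1 : ZMod m)) ^ (Multiplicative.toAdd a).val = a := by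
      rw [← ofAdd_nsmul, nsmul_eq_mul, mul_one, ZMod.natCast_val, ZMod.cast_id, ofAdd_toAdd]
    have : SemidirectProduct.inl a =
        (SemidirectProduct.inl (Multiplicative.ofAdd (1 : ZMod m)) :
          zmodSemidirectProduct m (p ^ k) α h1) ^ (Multiplicative.toAdd a).val := by
      rw [← map_pow, hA]
    rw [this]
    exact pow_mem hinl1 _
  · have hX : (Multiplicative.ofAdd (1 : ZMod (p ^ k))) ^ (Multiplicative.toAdd x).val = x := by
      rw [← ofAdd_nsmul, nsmul_eq_mul, mul_one, ZMod.natCast_val, ZMod.cast_id, ofAdd_toAdd]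
    have : SemidirectProduct.inr x = g₀ ^ (Multiplicative.toAdd x).val := by
      rw [hg0def, ← map_pow, hX]
    rw [this]
    exact pow_mem hg₀mem _
end

section
/- There exists a prosolvable extension K of ℚ such that K has a field extension of degree 2, yet the non-degenerate quadratic form ⟨1,1⟩ over K, i.e., (x,y) ↦ x² + y², is not isomorphic to a scaled trace form over K. (One may take K = ℚ_sol ∩ ℝ, the fixed field of complex conjugation in the maximal prosolvable extension ℚ_sol of ℚ inside ℂ.) -/
universe u v

/-- A finite extension `L₀/K₀` is solvable if the Galois group of its Galois closure is a
solvable group. -/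
def IsSolvableExtension (K₀ : Type u) (L₀ : Type v) [Field K₀] [Field L₀] [Algebra K₀ L₀] :
    Prop :=
  IsSolvable (↥(IntermediateField.normalClosure K₀ L₀ (AlgebraicClosure L₀)) ≃ₐ[K₀]
    ↥(IntermediateField.normalClosure K₀ L₀ (AlgebraicClosure L₀)))

/-- `K/K₀` is prosolvable: every finite subextension `L₀/K₀` with `L₀ ⊆ K` is solvable. -/
def IsProsolvable (K₀ : Type u) (K : Type v) [Field K₀] [Field K] [Algebra K₀ K] : Prop :=
  ∀ L₀ : IntermediateField K₀ K, FiniteDimensional K₀ L₀ → IsSolvableExtension K₀ L₀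


open Polynomial Module IntermediateField in
lemma prosolvable_of_gal (F₀ : Type u) (K : Type v) [Field F₀] [CharZero F₀] [Field K]
    [Algebra F₀ K]
    (h : ∀ x : K, IsIntegral F₀ x → IsSolvable (minpoly F₀ x).Gal) :
    IsProsolvable F₀ K := by
  intro L₀ hfin
  haveI := hfin
  obtain ⟨α, hα⟩ := Field.exists_primitive_element F₀ ↥L₀
  set AC := AlgebraicClosure ↥L₀ with hAC
  set p := minpoly F₀ α with hp
  have hint : IsIntegral F₀ α := Algebra.IsIntegral.isIntegral α
  have hsolv : IsSolvable p.Gal := by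
    have h1 : minpoly F₀ ((algebraMap ↥L₀ K) α) = minpoly F₀ α :=
      minpoly.algebraMap_eq (algebraMap ↥L₀ K).injective α
    have h2 := h ((algebraMap ↥L₀ K) α) (hint.map (IsScalarTower.toAlgHom F₀ ↥L₀ K))
    rwa [h1] at h2
  set N := normalClosure F₀ ↥L₀ AC with hN
  have hsplits : ∀ s : ↥L₀, ((minpoly F₀ s).map (algebraMap F₀ AC)).Splits := fun s =>
    IsAlgClosed.splits _
  have hNA : N = IntermediateField.adjoin F₀ (p.rootSet AC) := by
    apply le_antisymm
    · apply iSup_le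
      intro f
      rw [AlgHom.fieldRange_eq_map, ← hα, IntermediateField.adjoin_map]
      apply IntermediateField.adjoin_le_iff.mpr
      rintro y ⟨x, hx, rfl⟩
      apply IntermediateField.subset_adjoin
      rw [Set.mem_singleton_iff] at hx
      subst hx
      rw [Polynomial.mem_rootSet]
      refine ⟨minpoly.ne_zero hint, ?_⟩
      rw [Polynomial.aeval_algHom_apply, minpoly.aeval, map_zero]
    · apply IntermediateField.adjoin_le_iff.mpr
      intro β hβ
      obtain ⟨φ, hφ⟩ := IntermediateField.exists_algHom_of_splits_of_aeval
        (fun s => ⟨Algebra.IsIntegral.isIntegral s, hsplits s⟩)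
        (Polynomial.mem_rootSet.mp hβ).2
      exact le_iSup (fun f : ↥L₀ →ₐ[F₀] AC => f.fieldRange) φ ⟨α, hφ⟩
  have hsf : IsSplittingField F₀ ↥N p := by
    rw [hNA]
    exact IntermediateField.adjoin_rootSet_isSplittingField (IsAlgClosed.splits _)
  have e : ↥N ≃ₐ[F₀] p.SplittingField := @IsSplittingField.algEquiv F₀ ↥N _ _ _ p hsf
  haveI : Group.IsSolvable Gal(p.SplittingField/F₀) := hsolv
  exact solvable_of_solvable_injective (f := (AlgEquiv.autCongr e).toMonoidHom)
    (AlgEquiv.autCongr e).injective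


open Polynomial Module IntermediateField in
lemma not_scaledTraceForm {K : Type u} [Field K] (P : K → Prop)
    (h2 : (2 : K) ≠ 0)
    (hadd : ∀ x y, P x → P y → P (x + y))
    (hsqP : ∀ x : K, P (x * x))
    (hPsq : ∀ k, P k → ∃ c, c ^ 2 = k)
    (htot : ∀ x, P x ∨ P (-x))
    (hasym : ∀ x, P x → P (-x) → x = 0)
    (hmul : ∀ x y, P x → P y → P (x * y))
    (hinv : ∀ x, P x → P x⁻¹) :
    ¬ IsScaledTraceForm ((1 : Matrix (Fin 2) (Fin 2) K).toQuadraticMap') := by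
  classical
  rintro ⟨F, _, _, hfd, -, α, hα0, ⟨e⟩⟩
  haveI := hfd
  have hQP : ∀ m : Fin 2 → K, P ((1 : Matrix (Fin 2) (Fin 2) K).toQuadraticMap' m) := by
    intro m
    have hm : (1 : Matrix (Fin 2) (Fin 2) K).toQuadraticMap' m = m 0 * m 0 + m 1 * m 1 := by
      simp [Matrix.toQuadraticMap', Matrix.toQuadraticForm', LinearMap.BilinMap.toQuadraticMap_apply,
        Matrix.toLinearMap₂'_apply, Fin.sum_univ_two, Matrix.one_apply]
    rw [hm]
    exact hadd _ _ (hsqP _) (hsqP _)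
  have hstP : ∀ z : F, P (scaledTraceForm K F α z) := by
    intro z
    obtain ⟨m, rfl⟩ := EquivLike.surjective e z
    rw [e.map_app]
    exact hQP m
  have hrank : finrank K F = 2 := by
    rw [← e.toLinearEquiv.finrank_eq, finrank_fin_fun]
  -- an element outside the base field
  obtain ⟨ζ, hζ⟩ : ∃ z : F, z ∉ (⊥ : Subalgebra K F) := by
    by_contra hc
    push_neg at hc
    have hbot : (⊥ : Subalgebra K F) = ⊤ := eq_top_iff.mpr fun x _ => hc x
    rw [Subalgebra.bot_eq_top_iff_finrank_eq_one, hrank] at hbot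
    norm_num at hbot
  have hζint : IsIntegral K ζ := IsIntegral.of_finite K ζ
  set p := minpoly K ζ with hpdef
  have hpmonic : p.Monic := minpoly.monic hζint
  have hdeg : p.natDegree = 2 := by
    have hdvd : p.natDegree ∣ 2 := by
      rw [← hrank, ← IntermediateField.adjoin.finrank hζint]
      exact ⟨finrank (↥K⟮ζ⟯) F, (finrank_mul_finrank K (↥K⟮ζ⟯) F).symm⟩
    rcases (Nat.dvd_prime Nat.prime_two).mp hdvd with h1 | h2'
    · exfalso
      apply hζ
      have h0 := minpoly.aeval K ζ
      rw [aeval_eq_sum_range, ← hpdef, h1] at h0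
      simp only [Finset.sum_range_succ, Finset.sum_range_zero, zero_add, pow_zero, pow_one] at h0
      have hc1 : p.coeff 1 = 1 := by rw [← h1]; exact hpmonic.coeff_natDegree
      rw [hc1, one_smul] at h0
      refine Algebra.mem_bot.mpr ⟨-(p.coeff 0), ?_⟩
      rw [Algebra.algebraMap_eq_smul_one, neg_smul]
      exact neg_eq_of_add_eq_zero_right h0
    · exact h2'
  -- quadratic relation for ζ
  have hrel : ζ * ζ + algebraMap K F (p.coeff 1) * ζ + algebraMap K F (p.coeff 0) = 0 := by
    have h0 := minpoly.aeval K ζ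
    rw [aeval_eq_sum_range, ← hpdef, hdeg] at h0
    simp only [Finset.sum_range_succ, Finset.sum_range_zero, zero_add, pow_zero, pow_one,
      Algebra.smul_def, mul_one] at h0
    have hc2 : p.coeff 2 = 1 := by rw [← hdeg]; exact hpmonic.coeff_natDegree
    rw [hc2, map_one, one_mul] at h0
    linear_combination h0
  set d := (p.coeff 1) ^ 2 / 4 - p.coeff 0 with hd
  set ω := ζ + algebraMap K F (p.coeff 1 / 2) with hω
  have hB : algebraMap K F (p.coeff 1 / 2) + algebraMap K F (p.coeff 1 / 2)
      = algebraMap K F (p.coeff 1) := by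
    rw [← map_add]
    congr 1
    rw [← add_div, ← two_mul, mul_div_cancel_left₀ _ h2]
  have hω2 : ω * ω = algebraMap K F d := by
    have hmap : algebraMap K F d
        = (algebraMap K F (p.coeff 1 / 2)) ^ 2 - algebraMap K F (p.coeff 0) := by
      rw [← map_pow, ← map_sub]
      congr 1
      rw [hd, div_pow]
      norm_num
    rw [hω, hmap]
    linear_combination hrel + ζ * hB
  have hωbot : ω ∉ (⊥ : Subalgebra K F) := by
    intro hmem
    apply hζ
    have hz : ζ = ω - algebraMap K F (p.coeff 1 / 2) := by rw [hω]; ring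
    rw [hz]
    exact sub_mem hmem (Subalgebra.algebraMap_mem _ _)
  have hdnsq : ¬ ∃ c : K, c ^ 2 = d := by
    rintro ⟨c, hc⟩
    have hprod : (ω - algebraMap K F c) * (ω + algebraMap K F c) = 0 := by
      have hcc : (algebraMap K F c) ^ 2 = algebraMap K F d := by rw [← map_pow, hc]
      linear_combination hω2 - hcc
    rcases mul_eq_zero.mp hprod with h | h
    · apply hωbot
      have : ω = algebraMap K F c := by linear_combination h
      rw [this]; exact Subalgebra.algebraMap_mem _ _
    · apply hωbot
      have : ω = algebraMap K F (-c) := by rw [map_neg]; linear_combination h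
      rw [this]; exact Subalgebra.algebraMap_mem _ _
  have hPd : ¬ P d := fun h => hdnsq (hPsq d h)
  have hd0 : d ≠ 0 := fun h => hdnsq ⟨0, by rw [h]; ring⟩
  -- basis 1, ω
  have hli : LinearIndependent K ![1, ω] := by
    rw [LinearIndependent.pair_iff]
    intro s t hst
    have ht : t = 0 := by
      by_contra ht
      apply hωbot
      refine Algebra.mem_bot.mpr ⟨-s / t, ?_⟩
      rw [Algebra.algebraMap_eq_smul_one]
      have h3 : t • ω = (-s) • (1 : F) := by
        rw [neg_smul]
        exact (neg_eq_of_add_eq_zero_right hst).symm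
      calc (-s / t) • (1 : F) = (t⁻¹ * (-s)) • (1 : F) := by
            rw [div_eq_mul_inv, mul_comm]
        _ = t⁻¹ • ((-s) • (1 : F)) := by rw [mul_smul]
        _ = t⁻¹ • (t • ω) := by rw [h3]
        _ = (t⁻¹ * t) • ω := by rw [mul_smul]
        _ = ω := by rw [inv_mul_cancel₀ ht, one_smul]
    have hs : s = 0 := by
      rw [ht, zero_smul, add_zero, smul_eq_zero] at hst
      exact hst.resolve_right one_ne_zero
    exact ⟨hs, ht⟩
  have hcard : Fintype.card (Fin 2) = finrank K F := by rw [hrank, Fintype.card_fin]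
  set b := basisOfLinearIndependentOfCardEqFinrank hli hcard with hb
  have hbco : ⇑b = ![1, ω] := coe_basisOfLinearIndependentOfCardEqFinrank hli hcard
  have hb0 : b 0 = 1 := by rw [hbco]; rfl
  have hb1 : b 1 = ω := by rw [hbco]; rfl
  -- traces
  have htrω : Algebra.trace K F ω = 0 := by
    rw [Algebra.trace_eq_matrix_trace b, Matrix.trace, Fin.sum_univ_two]
    have e00 : (Algebra.leftMulMatrix b) ω 0 0 = 0 := by
      rw [Algebra.leftMulMatrix_eq_repr_mul, hb0, mul_one, ← hb1, b.repr_self]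
      simp
    have e11 : (Algebra.leftMulMatrix b) ω 1 1 = 0 := by
      rw [Algebra.leftMulMatrix_eq_repr_mul, hb1]
      have hωd : ω * ω = d • b 0 := by rw [hb0, hω2, Algebra.smul_def, mul_one]
      rw [hωd, map_smul, b.repr_self]
      simp
    simp [Matrix.diag, e00, e11]
  set a := b.repr α 0 with ha'
  set c := b.repr α 1 with hc'
  have hαab : α = algebraMap K F a + algebraMap K F c * ω := by
    have hs := b.sum_repr α
    rw [Fin.sum_univ_two, hb0, hb1] at hs
    rw [← hs, Algebra.smul_def, Algebra.smul_def, mul_one]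
  have htr : ∀ x y : K,
      Algebra.trace K F (algebraMap K F x + algebraMap K F y * ω) = 2 * x := by
    intro x y
    rw [map_add]
    have t1 : Algebra.trace K F (algebraMap K F x) = 2 * x := by
      rw [Algebra.trace_algebraMap, hrank, nsmul_eq_mul]
      norm_num
    have t2 : Algebra.trace K F (algebraMap K F y * ω) = 0 := by
      rw [← Algebra.smul_def, map_smul, htrω, smul_zero]
    rw [t1, t2, add_zero]
  have happ : ∀ z : F, scaledTraceForm K F α z = Algebra.trace K F (α * z * z) := by
    intro z
    simp only [scaledTraceForm, LinearMap.BilinMap.toQuadraticMap_apply,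
      LinearMap.compl₁₂_apply, LinearMap.mulLeft_apply, LinearMap.id_coe, id_eq,
      Algebra.traceForm_apply]
  have hval : ∀ u v : K,
      scaledTraceForm K F α (algebraMap K F u + algebraMap K F v * ω)
        = 2 * (a * (u * u + d * (v * v)) + 2 * (c * d * u * v)) := by
    intro u v
    have hz : α * (algebraMap K F u + algebraMap K F v * ω)
          * (algebraMap K F u + algebraMap K F v * ω)
        = algebraMap K F (a * (u * u + d * (v * v)) + 2 * (c * d * u * v))
          + algebraMap K F (c * (u * u + d * (v * v)) + 2 * (a * u * v)) * ω := by
      rw [hαab]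
      simp only [map_add, map_mul, map_ofNat]
      linear_combination (algebraMap K F a * algebraMap K F v * algebraMap K F v
        + algebraMap K F c * algebraMap K F v * algebraMap K F v * ω
        + 2 * algebraMap K F c * algebraMap K F u * algebraMap K F v) * hω2
    rw [happ, hz, htr]
  -- find a non-P value of the scaled trace form
  obtain ⟨z, hzP⟩ : ∃ z : F, ¬ P (scaledTraceForm K F α z) := by
    by_cases ha : a = 0
    · have hc : c ≠ 0 := by
        intro hc0
        apply hα0
        rw [hαab, ha, hc0]; simp
      have e1 : scaledTraceForm K F α (algebraMap K F 1 + algebraMap K F 1 * ω)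
          = 4 * (c * d) := by rw [hval 1 1, ha]; ring
      have e2 : scaledTraceForm K F α (algebraMap K F 1 + algebraMap K F (-1) * ω)
          = -(4 * (c * d)) := by rw [hval 1 (-1), ha]; ring
      by_cases hp : P (4 * (c * d))
      · refine ⟨algebraMap K F 1 + algebraMap K F (-1) * ω, ?_⟩
        rw [e2]
        intro hP'
        have h40 := hasym _ hp hP'
        have h4 : (4 : K) ≠ 0 := by
          rw [show (4 : K) = 2 * 2 by norm_num]
          exact mul_ne_zero h2 h2
        rcases mul_eq_zero.mp h40 with h | h
        · exact h4 h
        · rcases mul_eq_zero.mp h with h | h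
          · exact hc h
          · exact hd0 h
      · exact ⟨algebraMap K F 1 + algebraMap K F 1 * ω, by rw [e1]; exact hp⟩
    · have e1 : scaledTraceForm K F α (algebraMap K F 1 + algebraMap K F 0 * ω)
          = 2 * a := by rw [hval 1 0]; ring
      have e2 : scaledTraceForm K F α (algebraMap K F 0 + algebraMap K F 1 * ω)
          = 2 * (a * d) := by rw [hval 0 1]; ring
      by_cases hp : P (2 * a)
      · refine ⟨algebraMap K F 0 + algebraMap K F 1 * ω, ?_⟩
        rw [e2]
        intro hP'
        apply hPd
        have hPmul : P ((2 * (a * d)) * (2 * a)⁻¹) := hmul _ _ hP' (hinv _ hp)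
        have hde : (2 * (a * d)) * (2 * a)⁻¹ = d := by
          field_simp
        rwa [hde] at hPmul
      · exact ⟨algebraMap K F 1 + algebraMap K F 0 * ω, by rw [e1]; exact hp⟩
  exact hzP (hstP z)


open Polynomial in
lemma sqrt_mem_solvableByRad (k : ↥(solvableByRad ℚ ℝ)) (hk : 0 ≤ (k : ℝ)) :
    ∃ c : ↥(solvableByRad ℚ ℝ), c ^ 2 = k := by
  have hmem : Real.sqrt k ∈ solvableByRad ℚ ℝ := by
    refine solvableByRad.rad_mem two_ne_zero ?_
    have h : (Real.sqrt k) ^ 2 = (k : ℝ) := Real.sq_sqrt hk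
    rw [h]
    exact k.2
  refine ⟨⟨Real.sqrt k, hmem⟩, ?_⟩
  ext
  push_cast
  exact Real.sq_sqrt hk

/-- There is a prosolvable extension `K` of `ℚ` that has a field extension of degree `2`, yet
the quadratic form `⟨1,1⟩`, i.e. `(x,y) ↦ x² + y²`, is not isomorphic to a scaled trace form
over `K` (one may take `K = ℚ_sol ∩ ℝ`). -/
theorem exists_prosolvable_extension_sumSquares_not_scaledTraceForm :
    ∃ (K : Type) (_ : Field K) (_ : Algebra ℚ K), IsProsolvable ℚ K ∧
      (∃ (L : Type) (_ : Field L) (_ : Algebra K L),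
        FiniteDimensional K L ∧ Module.finrank K L = 2) ∧
      ¬ IsScaledTraceForm ((1 : Matrix (Fin 2) (Fin 2) K).toQuadraticMap') := by
  classical
  set K := ↥(solvableByRad ℚ ℝ) with hK
  refine ⟨K, inferInstance, inferInstance, ?_, ?_, ?_⟩
  · exact prosolvable_of_gal ℚ K (fun x _ => by
      rw [← minpoly.algebraMap_eq (algebraMap K ℝ).injective x]; exact solvableByRad.isSolvable x.2)
  · -- a degree-2 extension of K
    have hirr : Irreducible (Polynomial.X ^ 2 - Polynomial.C (-1 : K)) := by
      apply X_pow_sub_C_irreducible_of_prime Nat.prime_two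
      intro b hb
      have hb' : ((b : ℝ)) ^ 2 = -1 := by
        have := congrArg (fun x : K => (x : ℝ)) hb
        push_cast at this
        exact this
      nlinarith [sq_nonneg (b : ℝ)]
    haveI : Fact (Irreducible (Polynomial.X ^ 2 - Polynomial.C (-1 : K))) := ⟨hirr⟩
    have hq0 : (Polynomial.X ^ 2 - Polynomial.C (-1 : K)) ≠ 0 := hirr.ne_zero
    refine ⟨AdjoinRoot (Polynomial.X ^ 2 - Polynomial.C (-1 : K)), inferInstance,
      inferInstance, ?_, ?_⟩
    · exact (AdjoinRoot.powerBasis hq0).finite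
    · rw [(AdjoinRoot.powerBasis hq0).finrank, AdjoinRoot.powerBasis_dim,
        Polynomial.natDegree_X_pow_sub_C]
  · -- the sum of two squares form is not a scaled trace form
    apply not_scaledTraceForm (fun k : K => 0 ≤ (k : ℝ))
    · intro h
      have := congrArg (fun x : K => (x : ℝ)) h
      push_cast at this
      norm_num at this
    · intro x y hx hy
      push_cast
      exact add_nonneg hx hy
    · intro x
      push_cast
      exact mul_self_nonneg _
    · intro k hk
      exact sqrt_mem_solvableByRad k hk
    · intro x
      rcases le_total 0 (x : ℝ) with h | h
      · exact Or.inl h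
      · right
        rw [show ((-x : K) : ℝ) = -(x : ℝ) from rfl]
        linarith
    · intro x hx hnx
      have hnx' : (x : ℝ) ≤ 0 := by
        rw [show ((-x : K) : ℝ) = -(x : ℝ) from rfl] at hnx
        linarith
      have : (x : ℝ) = 0 := le_antisymm hnx' hx
      exact_mod_cast this
    · intro x y hx hy
      push_cast
      exact mul_nonneg hx hy
    · intro x hx
      push_cast
      exact inv_nonneg.mpr hx
end

section
/- Let ℚ_sol be the maximal prosolvable extension of ℚ inside ℂ (the compositum of all finite solvable Galois extensions of ℚ contained in ℂ), and let K = ℚ_sol ∩ ℝ. Then [ℚ_sol : K] = 2, and ℚ_sol is the unique degree-2 extension of K: every field extension L/K of degree 2 is K-isomorphic to ℚ_sol. -/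
open IntermediateField
open Polynomial

/-- The maximal prosolvable extension of `ℚ` inside `ℂ`: the compositum of all finite solvable
Galois extensions of `ℚ` contained in `ℂ`. -/
noncomputable def QSol : IntermediateField ℚ ℂ :=
  ⨆ (L : IntermediateField ℚ ℂ) (_ : FiniteDimensional ℚ L ∧ IsGalois ℚ L ∧
    IsSolvable (L ≃ₐ[ℚ] L)), L

/-- The predicate of being finite, Galois, solvable. -/
def IsSG (L : IntermediateField ℚ ℂ) : Prop :=
  FiniteDimensional ℚ L ∧ IsGalois ℚ L ∧ IsSolvable (L ≃ₐ[ℚ] L)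

lemma QSol_eq_iSup : QSol = ⨆ (L : {L : IntermediateField ℚ ℂ // IsSG L}), (L : IntermediateField ℚ ℂ) := by
  rw [QSol, iSup_subtype]; rfl

/-- transfer solvability along an algebra isomorphism -/
lemma isSolvable_of_algEquiv {F A B : Type*} [Field F] [Field A] [Field B] [Algebra F A]
    [Algebra F B] (e : A ≃ₐ[F] B) (h : IsSolvable (B ≃ₐ[F] B)) : IsSolvable (A ≃ₐ[F] A) :=
  haveI : Group.IsSolvable (B ≃ₐ[F] B) := h; solvable_of_solvable_injective (f := e.autCongr.toMonoidHom) e.autCongr.injective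

lemma isSG_adjoin_rootSet (p : ℚ[X]) (hp : IsSolvable p.Gal) :
    IsSG (adjoin ℚ (p.rootSet ℂ)) := by
  have hsplit : (p.map (algebraMap ℚ ℂ)).Splits := IsAlgClosed.splits _
  set L := adjoin ℚ (p.rootSet ℂ) with hL
  haveI hSF : p.IsSplittingField ℚ L := adjoin_rootSet_isSplittingField hsplit
  haveI : FiniteDimensional ℚ L := IsSplittingField.finiteDimensional L p
  haveI : Normal ℚ L := Normal.of_isSplittingField p
  haveI : IsGalois ℚ L := ⟨⟩
  refine ⟨inferInstance, inferInstance, ?_⟩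
  exact isSolvable_of_algEquiv (IsSplittingField.algEquiv L p) hp

lemma nonempty_SG : Nonempty {L : IntermediateField ℚ ℂ // IsSG L} :=
  ⟨⟨_, isSG_adjoin_rootSet X gal_X_isSolvable⟩⟩

/-- every finite solvable Galois intermediate field is the splitting field of a polynomial
with solvable Galois group -/
lemma IsSG.exists_poly {L : IntermediateField ℚ ℂ} (h : IsSG L) :
    ∃ p : ℚ[X], IsSolvable p.Gal ∧ p ≠ 0 ∧ L = adjoin ℚ (p.rootSet ℂ) ∧
      p.IsSplittingField ℚ L := by
  obtain ⟨hfd, hgal, hsol⟩ := h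
  obtain ⟨θ, hθ⟩ := Field.exists_primitive_element ℚ L
  have hint : IsIntegral ℚ θ := IsIntegral.of_finite ℚ θ
  set p := minpoly ℚ (L.val θ) with hp
  have hpθ : p = minpoly ℚ θ := minpoly.algHom_eq L.val (Subtype.val_injective) θ
  have hintc : IsIntegral ℚ (L.val θ) := hint.map L.val
  have hpne : p ≠ 0 := minpoly.ne_zero hintc
  have hsplitL : (p.map (algebraMap ℚ L)).Splits := by
    rw [hpθ]
    exact IsGalois.splits (F := ℚ) (E := ↥L) θ
  -- roots of p in ℂ are the image of roots in L
  have himg : (L.val '' (p.rootSet L)) = p.rootSet ℂ := hsplitL.image_rootSet L.val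
  have hL_eq : L = adjoin ℚ (p.rootSet ℂ) := by
    apply le_antisymm
    · -- L = ℚ⟮L.val θ⟯ ≤ adjoin of rootSet
      have h1 : IntermediateField.map L.val (adjoin ℚ {θ}) = adjoin ℚ {L.val θ} := by
        rw [adjoin_map]; simp
      have h2 : IntermediateField.map L.val ⊤ = L := by
        apply SetLike.coe_injective
        rw [coe_map]
        simp only [coe_top, Set.image_univ]
        exact SetLike.ext'_iff.mp (IntermediateField.fieldRange_val L)
      rw [← h2]; erw [← hθ, h1]
      apply adjoin_le_iff.mpr
      rintro x (rfl : x = L.val θ)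
      apply subset_adjoin
      rw [mem_rootSet]
      exact ⟨hpne, minpoly.aeval ℚ (L.val θ)⟩
    · apply adjoin_le_iff.mpr
      rw [← himg]
      rintro x ⟨y, _, rfl⟩
      exact y.2
  haveI hSF : p.IsSplittingField ℚ L := by
    refine isSplittingField_iff.mpr ?_
    exact ⟨hsplitL, hL_eq⟩
  exact ⟨p, isSolvable_of_algEquiv (IsSplittingField.algEquiv L p).symm hsol, hpne, hL_eq, hSF⟩

lemma directed_SG : Directed (· ≤ ·) (fun L : {L : IntermediateField ℚ ℂ // IsSG L} =>
    (L : IntermediateField ℚ ℂ)) := by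
  rintro ⟨L₁, h₁⟩ ⟨L₂, h₂⟩
  obtain ⟨p₁, hs₁, hne₁, hL₁, -⟩ := h₁.exists_poly
  obtain ⟨p₂, hs₂, hne₂, hL₂, -⟩ := h₂.exists_poly
  refine ⟨⟨_, isSG_adjoin_rootSet (p₁ * p₂) (gal_mul_isSolvable hs₁ hs₂)⟩, ?_, ?_⟩
  · show L₁ ≤ adjoin ℚ ((p₁ * p₂).rootSet ℂ)
    rw [hL₁]
    apply adjoin.mono
    intro x hx
    rw [mem_rootSet] at hx ⊢
    exact ⟨mul_ne_zero hne₁ hne₂, by rw [map_mul, hx.2, zero_mul]⟩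
  · show L₂ ≤ adjoin ℚ ((p₁ * p₂).rootSet ℂ)
    rw [hL₂]
    apply adjoin.mono
    intro x hx
    rw [mem_rootSet] at hx ⊢
    exact ⟨mul_ne_zero hne₁ hne₂, by rw [map_mul, hx.2, mul_zero]⟩

lemma mem_QSol_iff {x : ℂ} : x ∈ QSol ↔ ∃ L : IntermediateField ℚ ℂ, IsSG L ∧ x ∈ L := by
  haveI := nonempty_SG
  rw [QSol_eq_iSup, ← SetLike.mem_coe, IntermediateField.coe_iSup_of_directed directed_SG]
  simp only [Set.mem_iUnion, SetLike.mem_coe, Subtype.exists]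
  tauto

/-- Membership in `QSol` from solvable Galois group of the minimal polynomial. -/
lemma mem_QSol_of_solvable {x : ℂ} (hx : IsIntegral ℚ x)
    (hs : IsSolvable (minpoly ℚ x).Gal) : x ∈ QSol := by
  have hsg := isSG_adjoin_rootSet (minpoly ℚ x) hs
  rw [mem_QSol_iff]
  refine ⟨_, hsg, subset_adjoin ℚ _ ?_⟩
  rw [mem_rootSet]
  exact ⟨minpoly.ne_zero hx, minpoly.aeval ℚ x⟩

/-- Elements of `QSol` are integral with solvable Galois group of minimal polynomial. -/
lemma isIntegral_isSolvable_of_mem_QSol {x : ℂ} (hx : x ∈ QSol) :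
    IsIntegral ℚ x ∧ IsSolvable (minpoly ℚ x).Gal := by
  rw [mem_QSol_iff] at hx
  obtain ⟨L, hL, hxL⟩ := hx
  obtain ⟨hfd, hgal, -⟩ := id hL
  have hminp : minpoly ℚ x = minpoly ℚ (⟨x, hxL⟩ : L) := by
    have := minpoly.algHom_eq L.val Subtype.val_injective (⟨x, hxL⟩ : L)
    simp only [val_mk] at this
    exact this
  have hintx : IsIntegral ℚ x := by
    have := (IsIntegral.of_finite ℚ (⟨x, hxL⟩ : L)).map L.val
    simpa using this
  refine ⟨hintx, ?_⟩
  obtain ⟨q, hqsol, hqne, hLq, hSF⟩ := hL.exists_poly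
  haveI := hSF
  have h1 : ((minpoly ℚ x).map (algebraMap ℚ L)).Splits := by
    rw [hminp]
    exact IsGalois.splits (F := ℚ) (E := ↥L) _
  have e := IsSplittingField.algEquiv L q
  have h2 : ((minpoly ℚ x).map (algebraMap ℚ q.SplittingField)).Splits := by
    have := h1.map e.toAlgHom.toRingHom
    rwa [Polynomial.map_map, show e.toAlgHom.toRingHom.comp (algebraMap ℚ L) = algebraMap ℚ q.SplittingField from
      AlgHom.comp_algebraMap e.toAlgHom] at this
  exact gal_isSolvable_of_splits ⟨h2⟩ hqsol

/-- analogue of `solvableByRad.induction3`. -/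
lemma gal_isSolvable_of_pow {F E : Type*} [Field F] [Field E] [Algebra F E] {α : E} {n : ℕ}
    (hn : n ≠ 0) (hint : IsIntegral F (α ^ n)) (hα : IsSolvable (minpoly F (α ^ n)).Gal) :
    IsSolvable (minpoly F α).Gal := by
  let p := minpoly F (α ^ n)
  have hp : p.comp (X ^ n) ≠ 0 := by
    intro h
    cases' comp_eq_zero_iff.mp h with h' h'
    · exact minpoly.ne_zero hint h'
    · exact hn (by rw [← @natDegree_C F, ← h'.2, natDegree_X_pow])
  apply gal_isSolvable_of_splits
  · exact ⟨Splits.of_dvd (SplittingField.splits (p.comp (X ^ n))) (map_ne_zero hp)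
      (Polynomial.map_dvd (algebraMap F _) <| minpoly.dvd F α (by rw [aeval_comp, aeval_X_pow, minpoly.aeval]))⟩
  · refine gal_isSolvable_tower p (p.comp (X ^ n)) ?_ hα ?_
    · exact Gal.splits_in_splittingField_of_comp _ _ (by rwa [natDegree_X_pow])
    · obtain ⟨s, hs⟩ := splits_iff_exists_multiset.1 (SplittingField.splits p)
      rw [map_comp, Polynomial.map_pow, map_X, hs, mul_comp, C_comp]
      apply gal_mul_isSolvable (gal_C_isSolvable _)
      rw [multiset_prod_comp]
      apply gal_prod_isSolvable
      intro q hq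
      rw [Multiset.mem_map] at hq
      obtain ⟨q, hq, rfl⟩ := hq
      rw [Multiset.mem_map] at hq
      obtain ⟨q, _, rfl⟩ := hq
      rw [sub_comp, X_comp, C_comp]
      exact gal_X_pow_sub_C_isSolvable n q

lemma sqrt_mem_QSol {x s : ℂ} (hx : x ∈ QSol) (hs : s ^ 2 = x) : s ∈ QSol := by
  obtain ⟨hint, hsol⟩ := isIntegral_isSolvable_of_mem_QSol hx
  subst hs
  have hints : IsIntegral ℚ s := hint.of_pow two_pos
  exact mem_QSol_of_solvable hints (gal_isSolvable_of_pow two_ne_zero hint hsol)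

lemma conj_mem_QSol {x : ℂ} (hx : x ∈ QSol) : (starRingEnd ℂ) x ∈ QSol := by
  obtain ⟨hint, hsol⟩ := isIntegral_isSolvable_of_mem_QSol hx
  let f : ℂ →ₐ[ℚ] ℂ := (Complex.conjAe.toAlgHom.restrictScalars ℚ)
  have hfx : f x = (starRingEnd ℂ) x := rfl
  have h1 : minpoly ℚ ((starRingEnd ℂ) x) = minpoly ℚ x := by
    rw [← hfx]
    exact minpoly.algHom_eq f (Complex.conjAe.injective) x
  have h2 : IsIntegral ℚ ((starRingEnd ℂ) x) := by rw [← hfx]; exact hint.map f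
  exact mem_QSol_of_solvable h2 (h1 ▸ hsol)

lemma I_mem_QSol : Complex.I ∈ QSol := by
  have haevalI : (Polynomial.aeval Complex.I) ((X : ℚ[X]) ^ 2 + 1) = 0 := by
    simp [Complex.I_sq]
  have hmonic : ((X : ℚ[X]) ^ 2 + 1).Monic := by
    simpa using (monic_X_pow_add_C (a := (1 : ℚ)) (two_ne_zero))
  have hint : IsIntegral ℚ Complex.I := ⟨X ^ 2 + 1, hmonic, haevalI⟩
  apply mem_QSol_of_solvable hint
  have hdvd : minpoly ℚ Complex.I ∣ (X ^ 2 + 1 : ℚ[X]) := minpoly.dvd ℚ _ haevalI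
  have hXC : ((X : ℚ[X]) ^ 2 - C (-1 : ℚ)) = X ^ 2 + 1 := by
    rw [map_neg, map_one, sub_neg_eq_add]
  have hsplits : ((minpoly ℚ Complex.I).map
      (algebraMap ℚ (((X : ℚ[X]) ^ 2 + 1).SplittingField))).Splits :=
    Splits.of_dvd (SplittingField.splits _) (map_ne_zero hmonic.ne_zero) (Polynomial.map_dvd (algebraMap ℚ _) hdvd)
  have hsol : IsSolvable ((X : ℚ[X]) ^ 2 + 1).Gal := by
    rw [← hXC]; exact gal_X_pow_sub_C_isSolvable 2 (-1 : ℚ)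
  exact gal_isSolvable_of_splits ⟨hsplits⟩ hsol


/-- The subfield `ℝ` of `ℂ`, as an intermediate field of `ℂ/ℚ`. -/
noncomputable def RealsInComplex : IntermediateField ℚ ℂ :=
  Subfield.toIntermediateField Complex.ofRealHom.fieldRange fun x =>
    ⟨(x : ℝ), rfl⟩

/-- `K = ℚ_sol ∩ ℝ` (the fixed field of complex conjugation on `ℚ_sol`). -/
noncomputable def QSolReal : IntermediateField ℚ ℂ := QSol ⊓ RealsInComplex

lemma mem_RealsInComplex {z : ℂ} : z ∈ RealsInComplex ↔ z.im = 0 := by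
  constructor
  · rintro ⟨r, rfl⟩
    exact Complex.ofReal_im r
  · intro h
    exact ⟨z.re, by apply Complex.ext <;> simp [h]⟩

lemma mem_QSolReal {z : ℂ} : z ∈ QSolReal ↔ z ∈ QSol ∧ z.im = 0 := by
  rw [QSolReal, IntermediateField.mem_inf, mem_RealsInComplex]

lemma re_mem_QSolReal {z : ℂ} (hz : z ∈ QSol) : (z.re : ℂ) ∈ QSolReal := by
  rw [mem_QSolReal]
  refine ⟨?_, Complex.ofReal_im _⟩
  have h2 : (2 : ℂ) ∈ QSol := by
    have := IntermediateField.natCast_mem QSol 2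
    simpa using this
  have : (z.re : ℂ) = (z + (starRingEnd ℂ) z) / 2 := by
    rw [Complex.add_conj]
    field_simp
    push_cast; ring
  rw [this]
  exact div_mem (add_mem hz (conj_mem_QSol hz)) h2

lemma im_mem_QSolReal {z : ℂ} (hz : z ∈ QSol) : (z.im : ℂ) ∈ QSolReal := by
  rw [mem_QSolReal]
  refine ⟨?_, Complex.ofReal_im _⟩
  have h2I : (2 : ℂ) * Complex.I ∈ QSol := by
    refine mul_mem ?_ I_mem_QSol
    have := IntermediateField.natCast_mem QSol 2
    simpa using this
  have : (z.im : ℂ) = (z - (starRingEnd ℂ) z) / (2 * Complex.I) := by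
    rw [Complex.sub_conj]
    have : (2 : ℂ) * Complex.I ≠ 0 := by
      simp [Complex.I_ne_zero]
    field_simp
    push_cast; ring
  rw [this]
  exact div_mem (sub_mem hz (conj_mem_QSol hz)) h2I

/-- abbreviation for `QSol` as extension of `QSolReal`. -/
noncomputable abbrev QSol' : IntermediateField ↥QSolReal ℂ :=
  IntermediateField.extendScalars (inf_le_left : QSolReal ≤ QSol)

lemma mem_QSol' {z : ℂ} : z ∈ QSol' ↔ z ∈ QSol := Iff.rfl

-- test coercion facts
example (c : ↥QSolReal) (v : ↥QSol') : ((c • v : ↥QSol') : ℂ) = (c : ℂ) * (v : ℂ) := by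
  rfl
example (c : ↥QSolReal) : ((algebraMap ↥QSolReal ↥QSol' c : ↥QSol') : ℂ) = (c : ℂ) := rfl

noncomputable def oneQ : ↥QSol' := 1
noncomputable def iQ : ↥QSol' := ⟨Complex.I, I_mem_QSol⟩

lemma linIndep_one_I : LinearIndependent ↥QSolReal ![oneQ, iQ] := by
  rw [LinearIndependent.pair_iff]
  intro s t hst
  have h0 : ((s • oneQ + t • iQ : ↥QSol') : ℂ) = 0 := by rw [hst]; rfl
  have h : (s : ℂ) * 1 + (t : ℂ) * Complex.I = 0 := h0
  have hs0 : (s : ℂ).im = 0 := (mem_QSolReal.mp s.2).2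
  have ht0 : (t : ℂ).im = 0 := (mem_QSolReal.mp t.2).2
  rw [mul_one] at h
  rw [Complex.ext_iff] at h
  simp [Complex.add_im, Complex.mul_im, hs0, ht0] at h
  obtain ⟨h1, h2⟩ := h
  constructor
  · ext; exact Complex.ext h1 hs0
  · ext; exact Complex.ext h2 ht0

lemma span_one_I : ⊤ ≤ Submodule.span ↥QSolReal (Set.range ![oneQ, iQ]) := by
  intro v _
  have hrange : Set.range ![oneQ, iQ] = {oneQ, iQ} := by
    simp [Matrix.range_cons, Matrix.range_empty, Set.pair_comm]
  rw [hrange, Submodule.mem_span_pair]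
  have hvQ : (v : ℂ) ∈ QSol := v.2
  refine ⟨⟨((v : ℂ).re : ℂ), re_mem_QSolReal hvQ⟩, ⟨((v : ℂ).im : ℂ), im_mem_QSolReal hvQ⟩, ?_⟩
  apply Subtype.ext
  show ((v:ℂ).re : ℂ) * 1 + ((v:ℂ).im : ℂ) * Complex.I = (v : ℂ)
  rw [mul_one]
  exact Complex.re_add_im _

noncomputable def basisQSol' : Module.Basis (Fin 2) ↥QSolReal ↥QSol' :=
  Module.Basis.mk linIndep_one_I span_one_I

lemma finrank_QSol' : Module.finrank ↥QSolReal ↥QSol' = 2 := by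
  rw [Module.finrank_eq_card_basis basisQSol', Fintype.card_fin]

instance : FiniteDimensional ↥QSolReal ↥QSol' := Module.Finite.of_basis basisQSol'

/-- For a nonsquare `e` in `K = QSolReal`, `e = (t·i)²` for some `t ∈ K`. -/
lemma exists_sqrt_neg {e : ↥QSolReal} (he : ∀ f : ↥QSolReal, f ^ 2 ≠ e) :
    ∃ t : ↥QSolReal, ((t : ℂ) * Complex.I) ^ 2 = (e : ℂ) := by
  have heQ : (e : ℂ) ∈ QSol := (inf_le_left : QSolReal ≤ QSol) e.2
  have heIm : (e : ℂ).im = 0 := (mem_QSolReal.mp e.2).2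
  obtain ⟨s, hs⟩ := IsAlgClosed.exists_pow_nat_eq (e : ℂ) (n := 2) two_pos
  have hsQ : s ∈ QSol := sqrt_mem_QSol heQ hs
  have hconj : (starRingEnd ℂ) s * (starRingEnd ℂ) s = s * s := by
    have h1 : (starRingEnd ℂ) s * (starRingEnd ℂ) s = (starRingEnd ℂ) (s * s) := by
      rw [map_mul]
    rw [h1]
    have h2 : s * s = (e : ℂ) := by rw [← hs]; ring
    rw [h2, Complex.conj_eq_iff_im.mpr heIm]
  rcases mul_self_eq_mul_self_iff.mp hconj with hcs | hcs
  · -- conj s = s : s is real, contradiction with nonsquare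
    exfalso
    have hsIm : s.im = 0 := Complex.conj_eq_iff_im.mp hcs
    exact he ⟨s, mem_QSolReal.mpr ⟨hsQ, hsIm⟩⟩ (Subtype.ext hs)
  · -- conj s = -s : s is purely imaginary
    have hsRe : s.re = 0 := by
      have := congrArg Complex.re hcs
      simp only [Complex.conj_re, Complex.neg_re] at this
      linarith
    have htQ : (s.im : ℂ) ∈ QSol := by
      have : (s.im : ℂ) = s / Complex.I := by
        rw [Complex.div_I]
        apply Complex.ext <;> simp [hsRe]
      rw [this]
      exact div_mem hsQ I_mem_QSol
    refine ⟨⟨(s.im : ℂ), mem_QSolReal.mpr ⟨htQ, Complex.ofReal_im _⟩⟩, ?_⟩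
    show ((s.im : ℂ) * Complex.I) ^ 2 = (e : ℂ)
    have hseq : (s.im : ℂ) * Complex.I = s := by
      apply Complex.ext <;> simp [hsRe]
    rw [hseq, hs]


set_option synthInstance.maxHeartbeats 400000 in
set_option maxHeartbeats 1000000 in
/-- Let `K = ℚ_sol ∩ ℝ`. Then `[ℚ_sol : K] = 2` and `ℚ_sol` is the unique degree-`2` extension
of `K`: every field extension `L/K` of degree `2` is `K`-isomorphic to `ℚ_sol`. -/
theorem qsol_unique_quadratic_extension :
    Module.finrank ↥QSolReal
      ↥(IntermediateField.extendScalars (F := QSolReal) (E := QSol) (inf_le_left : QSolReal ≤ QSol)) = 2 ∧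
    ∀ (L : Type) [Field L] [Algebra ↥QSolReal L], Module.finrank ↥QSolReal L = 2 →
      Nonempty (L ≃ₐ[↥QSolReal]
        ↥(IntermediateField.extendScalars (F := QSolReal) (E := QSol) (inf_le_left : QSolReal ≤ QSol))) := by
  refine ⟨finrank_QSol', ?_⟩
  intro L _ _ hL
  haveI : FiniteDimensional ↥QSolReal L := Module.finite_of_finrank_eq_succ hL
  haveI : CharZero ↥QSolReal :=
    charZero_of_injective_algebraMap (algebraMap ℚ ↥QSolReal).injective
  haveI : CharZero L := charZero_of_injective_algebraMap (algebraMap ↥QSolReal L).injective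
  let pb := Field.powerBasisOfFiniteOfSeparable ↥QSolReal L
  have hdim : pb.dim = 2 := by rw [← PowerBasis.finrank pb, hL]
  have hqdeg : (minpoly ↥QSolReal pb.gen).natDegree = 2 := by
    rw [PowerBasis.natDegree_minpoly, hdim]
  have hqmonic : (minpoly ↥QSolReal pb.gen).Monic := minpoly.monic pb.isIntegral_gen
  set q := minpoly ↥QSolReal pb.gen with hq
  set c1 := q.coeff 1 with hc1
  set c0 := q.coeff 0 with hc0
  have hcoeff2 : q.coeff 2 = 1 := by
    have := hqmonic.coeff_natDegree
    rwa [hqdeg] at this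
  -- the quadratic relation for the generator
  have hrel : pb.gen ^ 2 + algebraMap _ L c1 * pb.gen + algebraMap _ L c0 = 0 := by
    have h := minpoly.aeval ↥QSolReal pb.gen
    rw [← hq, aeval_eq_sum_range, hqdeg] at h
    rw [Finset.sum_range_succ, Finset.sum_range_succ, Finset.sum_range_one] at h
    rw [hcoeff2, one_smul, pow_zero, pow_one] at h
    rw [Algebra.smul_def, Algebra.smul_def] at h
    rw [mul_one] at h
    linear_combination h
  -- c1 ^ 2 - 4 * c0 is not a square in QSolReal
  have he : ∀ f : ↥QSolReal, f ^ 2 ≠ c1 ^ 2 - 4 * c0 := by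
    intro f hf
    have haf : (algebraMap ↥QSolReal L f) ^ 2 =
        (algebraMap ↥QSolReal L c1) ^ 2 - 4 * algebraMap ↥QSolReal L c0 := by
      rw [← map_pow, hf, map_sub, map_pow, map_mul, map_ofNat]
    have key : (2 * pb.gen + algebraMap ↥QSolReal L c1 - algebraMap ↥QSolReal L f) *
        (2 * pb.gen + algebraMap ↥QSolReal L c1 + algebraMap ↥QSolReal L f) = 0 := by
      linear_combination 4 * hrel - haf
    have hgen_mem : ∃ k : ↥QSolReal, pb.gen = algebraMap ↥QSolReal L k := by
      rcases mul_eq_zero.mp key with h | h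
      · refine ⟨(f - c1) / 2, ?_⟩
        rw [map_div₀, map_sub, map_ofNat, eq_div_iff (two_ne_zero (α := L))]
        linear_combination h
      · refine ⟨(-f - c1) / 2, ?_⟩
        rw [map_div₀, map_sub, map_neg, map_ofNat, eq_div_iff (two_ne_zero (α := L))]
        linear_combination h
    obtain ⟨k, hk⟩ := hgen_mem
    have : q.natDegree = 1 := by
      rw [hq, hk, minpoly.eq_X_sub_C, natDegree_X_sub_C]
    omega
  obtain ⟨t, ht⟩ := exists_sqrt_neg he
  -- the root in QSol'
  have hc1Q : ((c1 : ℂ)) ∈ QSol := (inf_le_left : QSolReal ≤ QSol) c1.2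
  have htQ : ((t : ℂ)) ∈ QSol := (inf_le_left : QSolReal ≤ QSol) t.2
  have h2Q : (2 : ℂ) ∈ QSol := by
    have := IntermediateField.natCast_mem QSol 2
    simpa using this
  have hmemρ : (-(c1 : ℂ) + (t : ℂ) * Complex.I) / 2 ∈ QSol' :=
    div_mem (add_mem (neg_mem hc1Q) (mul_mem htQ I_mem_QSol)) h2Q
  set ρ : ↥QSol' := ⟨(-(c1 : ℂ) + (t : ℂ) * Complex.I) / 2, hmemρ⟩ with hρdef
  have h4 : ((4 : ↥QSolReal) : ℂ) = 4 := by
    have : ((4 : ↥QSolReal) : ℂ) = (((4 : ℕ) : ↥QSolReal) : ℂ) := by norm_num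
    rw [this]
    norm_cast
  have hti : ((t : ℂ) * Complex.I) ^ 2 = (c1 : ℂ) ^ 2 - 4 * (c0 : ℂ) := by
    rw [ht]
    push_cast [h4]
    try ring
  have hρ : aeval ρ q = 0 := by
    rw [aeval_eq_sum_range, hqdeg]
    rw [Finset.sum_range_succ, Finset.sum_range_succ, Finset.sum_range_one]
    rw [hcoeff2, one_smul, pow_zero, pow_one]
    apply Subtype.ext
    show (c0 : ℂ) * 1 + (c1 : ℂ) * ((-(c1 : ℂ) + (t : ℂ) * Complex.I) / 2) +
      ((-(c1 : ℂ) + (t : ℂ) * Complex.I) / 2) ^ 2 = 0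
    linear_combination hti / 4
  let F : L →ₐ[↥QSolReal] ↥QSol' := pb.lift ρ hρ
  have hinj : Function.Injective F := F.toRingHom.injective
  have hsurj : Function.Surjective F := by
    have hfr : Module.finrank ↥QSolReal L = Module.finrank ↥QSolReal ↥QSol' := by
      rw [hL, finrank_QSol']
    have := (LinearMap.injective_iff_surjective_of_finrank_eq_finrank
      (f := F.toLinearMap) hfr).mp (by simpa using hinj)
    simpa using this
  exact ⟨AlgEquiv.ofBijective F ⟨hinj, hsurj⟩⟩
end
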